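/- arXiv:1602.04331 — 6 statements merged into one kernel-verified Lean document; each statement's English description precedes it below -/
import Mathlib

section
/- For integers n ≥ 1 and 0 ≤ s ≤ n-1, the identity (∑_{y=0}^{n-s-1} C(n-1-y, n-s-1-y)·2^y) + (∑_{y=0}^{s} C(n-1-y, s-y)·2^y) = 2^n holds. -/
private lemma rc_geom (m : ℕ) : ∑ y ∈ Finset.range (m + 1), 2 ^ y = 2 ^ (m + 1) - 1 := by
  induction m with
  | zero => simp
  | succ k ih =>
    rw [Finset.sum_range_succ, ih]
    have h1 : 1 ≤ 2 ^ (k + 1) := Nat.one_le_two_pow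
    have h2 : 2 ^ (k + 1 + 1) = 2 ^ (k + 1) + 2 ^ (k + 1) := by ring
    omega

private def rcF (m k : ℕ) : ℕ :=
  ∑ y ∈ Finset.range (k + 1), Nat.choose (m - y) (k - y) * 2 ^ y

private lemma rcF_zero (m : ℕ) : rcF m 0 = 1 := by
  simp [rcF]

private lemma rcF_self (m : ℕ) : rcF m m = 2 ^ (m + 1) - 1 := by
  have h : rcF m m = ∑ y ∈ Finset.range (m + 1), 2 ^ y := by
    apply Finset.sum_congr rfl
    intro y hy
    rw [Nat.choose_self, one_mul]
  rw [h, rc_geom]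

private lemma rcF_rec (m k : ℕ) (h : k ≤ m) :
    rcF (m + 1) (k + 1) = rcF m (k + 1) + rcF m k := by
  unfold rcF
  rw [Finset.sum_range_succ, Finset.sum_range_succ (n := k + 1)]
  have h1 : ∀ y ∈ Finset.range (k + 1),
      Nat.choose (m + 1 - y) (k + 1 - y) * 2 ^ y
        = Nat.choose (m - y) (k + 1 - y) * 2 ^ y + Nat.choose (m - y) (k - y) * 2 ^ y := by
    intro y hy
    have hy' : y ≤ k := Nat.lt_succ_iff.mp (Finset.mem_range.mp hy)
    have e1 : m + 1 - y = (m - y) + 1 := by omega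
    have e2 : k + 1 - y = (k - y) + 1 := by omega
    rw [e1, e2, Nat.choose_succ_succ, add_mul, add_comm]
  rw [Finset.sum_congr rfl h1, Finset.sum_add_distrib]
  simp only [Nat.sub_self, Nat.choose_zero_right, one_mul]
  ring

private lemma rcF_key (m : ℕ) : ∀ k, k ≤ m → rcF m k + rcF m (m - k) = 2 ^ (m + 1) := by
  induction m with
  | zero =>
    intro k hk
    interval_cases k
    simp [rcF_zero]
  | succ m ih =>
    intro k hk
    rcases Nat.eq_zero_or_pos k with h0 | hpos
    · subst h0
      rw [rcF_zero, Nat.sub_zero, rcF_self]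
      have : 1 ≤ 2 ^ (m + 1 + 1) := Nat.one_le_two_pow
      omega
    rcases eq_or_lt_of_le hk with heq | hlt
    · subst heq
      rw [Nat.sub_self, rcF_zero, rcF_self]
      have : 1 ≤ 2 ^ (m + 1 + 1) := Nat.one_le_two_pow
      omega
    · obtain ⟨k', rfl⟩ := Nat.exists_eq_add_of_lt hpos
      simp only [zero_add] at *
      have hk'm : k' + 1 ≤ m := by omega
      have hk'' : k' ≤ m := by omega
      rw [rcF_rec m k' hk'']
      have e : m + 1 - (k' + 1) = (m - (k' + 1)) + 1 := by omega
      rw [e, rcF_rec m (m - (k' + 1)) (by omega)]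
      have e2 : m - (k' + 1) + 1 = m - k' := by omega
      rw [e2]
      have h1 := ih (k' + 1) hk'm
      have h2 := ih k' hk''
      have h3 : 2 ^ (m + 1 + 1) = 2 ^ (m + 1) + 2 ^ (m + 1) := by ring
      omega

/-- For `n ≥ 1` and `0 ≤ s ≤ n-1`:
`(∑_{y=0}^{n-s-1} C(n-1-y, n-s-1-y)·2^y) + (∑_{y=0}^{s} C(n-1-y, s-y)·2^y) = 2^n`. -/
theorem roll_call_identity (n s : ℕ) (hn : 1 ≤ n) (hs : s ≤ n - 1) :
    (∑ y ∈ Finset.range (n - s), Nat.choose (n - 1 - y) (n - s - 1 - y) * 2 ^ y) +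
      (∑ y ∈ Finset.range (s + 1), Nat.choose (n - 1 - y) (s - y) * 2 ^ y) = 2 ^ n := by
  obtain ⟨m, rfl⟩ : ∃ m, n = m + 1 := ⟨n - 1, by omega⟩
  have hsm : s ≤ m := by omega
  have h1 : (∑ y ∈ Finset.range (m + 1 - s),
        Nat.choose (m + 1 - 1 - y) (m + 1 - s - 1 - y) * 2 ^ y) = rcF m (m - s) := by
    unfold rcF
    have e : m + 1 - s = (m - s) + 1 := by omega
    rw [e]
    apply Finset.sum_congr rfl
    intro y hy
    have e1 : m + 1 - 1 - y = m - y := by omega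
    have e2 : m - s + 1 - 1 - y = m - s - y := by omega
    rw [e1, e2]
  have h2 : (∑ y ∈ Finset.range (s + 1),
        Nat.choose (m + 1 - 1 - y) (s - y) * 2 ^ y) = rcF m s := by
    unfold rcF
    apply Finset.sum_congr rfl
    intro y hy
    have e1 : m + 1 - 1 - y = m - y := by omega
    rw [e1]
  rw [h1, h2, add_comm]
  exact rcF_key m s hsm
end

section
/- Let v : J^n → K be a (J,K) game with image of size at least 2, and define φ_i(v) = (1/(n!·|J|^n·(|im(v)|-1))) · ∑_{(π,a) ∈ S_n × J^n} τ_{π^{-1}(i)}(v,π,a), where τ_h(v,π,a) is the decrease in the number of possible outcomes after the h-th player (according to π) declares her vote a. Then ∑_{i=1}^n φ_i(v) = 1. -/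
open Finset

/-- The set of still-possible outcomes after the first `h` players (according to the
ordering `π`, where player `l` is called at position `π l`, `0`-indexed) have declared
their votes from the vote vector `a`. -/
def outcomes {n : ℕ} {J K : Type*} [Fintype J] [DecidableEq J] [DecidableEq K]
    (v : (Fin n → J) → K) (π : Equiv.Perm (Fin n)) (a : Fin n → J) (h : ℕ) : Finset K :=
  (Finset.univ.filter (fun a' : Fin n → J => ∀ l, (π l : ℕ) < h → a' l = a l)).image v

/-- `τ_h`: the decrease of uncertainty caused by the declaration of the `h`-th player
(`h` ranging in `1,…,n`). -/
def tau {n : ℕ} {J K : Type*} [Fintype J] [DecidableEq J] [DecidableEq K]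
    (v : (Fin n → J) → K) (π : Equiv.Perm (Fin n)) (a : Fin n → J) (h : ℕ) : ℕ :=
  (outcomes v π a (h - 1)).card - (outcomes v π a h).card

lemma outcomes_card_mono {n : ℕ} {J K : Type*} [Fintype J] [DecidableEq J] [DecidableEq K]
    (v : (Fin n → J) → K) (π : Equiv.Perm (Fin n)) (a : Fin n → J) {h1 h2 : ℕ}
    (hle : h1 ≤ h2) : (outcomes v π a h2).card ≤ (outcomes v π a h1).card := by
  apply Finset.card_le_card
  apply Finset.image_subset_image
  intro a' ha'
  simp only [Finset.mem_filter, Finset.mem_univ, true_and] at ha' ⊢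
  exact fun l hl => ha' l (lt_of_lt_of_le hl hle)

lemma outcomes_zero {n : ℕ} {J K : Type*} [Fintype J] [DecidableEq J] [DecidableEq K]
    (v : (Fin n → J) → K) (π : Equiv.Perm (Fin n)) (a : Fin n → J) :
    outcomes v π a 0 = Finset.univ.image v := by
  simp [outcomes]

lemma outcomes_n {n : ℕ} {J K : Type*} [Fintype J] [DecidableEq J] [DecidableEq K]
    (v : (Fin n → J) → K) (π : Equiv.Perm (Fin n)) (a : Fin n → J) :
    outcomes v π a n = {v a} := by
  have : (Finset.univ.filter (fun a' : Fin n → J => ∀ l, (π l : ℕ) < n → a' l = a l)) = {a} := by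
    ext a'
    simp only [Finset.mem_filter, Finset.mem_univ, true_and, Finset.mem_singleton]
    constructor
    · intro h; funext l; exact h l (π l).isLt
    · intro h l _; rw [h]
  rw [outcomes, this, Finset.image_singleton]

lemma sum_tau {n : ℕ} {J K : Type*} [Fintype J] [DecidableEq J] [DecidableEq K]
    (v : (Fin n → J) → K) (π : Equiv.Perm (Fin n)) (a : Fin n → J) :
    ∑ i : Fin n, (tau v π a ((π i : ℕ) + 1) : ℝ)
      = ((Finset.univ.image v).card : ℝ) - 1 := by
  have h1 : ∑ i : Fin n, (tau v π a ((π i : ℕ) + 1) : ℝ)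
      = ∑ i : Fin n, (tau v π a ((i : ℕ) + 1) : ℝ) :=
    Equiv.sum_comp π (fun i => (tau v π a ((i : ℕ) + 1) : ℝ))
  rw [h1, Fin.sum_univ_eq_sum_range (fun h => (tau v π a (h + 1) : ℝ)) n]
  have h2 : ∀ h : ℕ, (tau v π a (h + 1) : ℝ)
      = ((outcomes v π a h).card : ℝ) - ((outcomes v π a (h+1)).card : ℝ) := by
    intro h
    rw [tau]
    simp only [Nat.add_sub_cancel]
    rw [Nat.cast_sub (outcomes_card_mono v π a (Nat.le_succ h))]
  simp only [h2]
  rw [Finset.sum_range_sub' (fun h => ((outcomes v π a h).card : ℝ))]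
  rw [outcomes_zero, outcomes_n, Finset.card_singleton, Nat.cast_one]
open Finset

/-- The influence measure `φ_i` of Definition 3.2. Player `i` occupies position
`π i + 1` (1-indexed), i.e. `π⁻¹(i) = π i + 1` in the paper's notation. -/
noncomputable def phi {n : ℕ} {J K : Type*} [Fintype J] [DecidableEq J] [DecidableEq K]
    (v : (Fin n → J) → K) (i : Fin n) : ℝ :=
  (1 / ((n.factorial : ℝ) * (Fintype.card J : ℝ) ^ n *
      (((Finset.univ.image v).card : ℝ) - 1))) *
    ∑ π : Equiv.Perm (Fin n), ∑ a : Fin n → J, (tau v π a ((π i : ℕ) + 1) : ℝ)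

/-- Lemma 3.3 (efficiency): if the image of `v` has more than one element, the influence
measures of all players sum to `1`, and each lies in `[0,1]`. -/
theorem phi_efficient {n : ℕ} {J K : Type*} [Fintype J] [DecidableEq J] [DecidableEq K]
    (v : (Fin n → J) → K) (him : 1 < (Finset.univ.image v).card) :
    (∑ i : Fin n, phi v i) = 1 ∧ ∀ i : Fin n, phi v i ∈ Set.Icc (0 : ℝ) 1 := by
  set m : ℝ := (((Finset.univ.image v).card : ℝ)) with hm
  have hm1 : (0:ℝ) < m - 1 := by
    have : (1:ℝ) < m := by rw [hm]; exact_mod_cast him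
    linarith
  have hne : (Finset.univ : Finset (Fin n → J)).Nonempty := by
    have h1 : ((Finset.univ : Finset (Fin n → J)).image v).Nonempty :=
      Finset.card_pos.mp (lt_trans one_pos him)
    exact h1.of_image
  have hJ : (0:ℝ) < (Fintype.card J : ℝ) ^ n := by
    have h1 : 0 < Fintype.card (Fin n → J) := Fintype.card_pos_iff.mpr ⟨hne.choose⟩
    have h2 : Fintype.card (Fin n → J) = Fintype.card J ^ n := by
      rw [Fintype.card_fun, Fintype.card_fin]
    rw [h2] at h1
    exact_mod_cast h1
  have hfac : (0:ℝ) < (n.factorial : ℝ) := by exact_mod_cast n.factorial_pos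
  set D : ℝ := (n.factorial : ℝ) * (Fintype.card J : ℝ) ^ n * (m - 1) with hD
  have hDpos : 0 < D := by positivity
  have hτ_nonneg : ∀ (π : Equiv.Perm (Fin n)) (a : Fin n → J) (i : Fin n),
      (0:ℝ) ≤ (tau v π a ((π i : ℕ) + 1) : ℝ) := fun π a i => Nat.cast_nonneg _
  have hτ_le : ∀ (π : Equiv.Perm (Fin n)) (a : Fin n → J) (i : Fin n),
      (tau v π a ((π i : ℕ) + 1) : ℝ) ≤ m - 1 := by
    intro π a i
    rw [hm, ← sum_tau v π a]
    exact Finset.single_le_sum (fun j _ => hτ_nonneg π a j) (Finset.mem_univ i)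
  have hconst : ∑ π : Equiv.Perm (Fin n), ∑ _a : Fin n → J, (m - 1) = D := by
    rw [Finset.sum_const, Finset.sum_const, Finset.card_univ, Finset.card_univ,
      Fintype.card_perm, Fintype.card_fun, Fintype.card_fin, nsmul_eq_mul, nsmul_eq_mul,
      Nat.cast_pow, hD]
    ring
  have hSle : ∀ i : Fin n,
      ∑ π : Equiv.Perm (Fin n), ∑ a : Fin n → J, (tau v π a ((π i : ℕ) + 1) : ℝ) ≤ D := by
    intro i
    rw [← hconst]
    exact Finset.sum_le_sum fun π _ => Finset.sum_le_sum fun a _ => hτ_le π a i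
  have hSnonneg : ∀ i : Fin n,
      (0:ℝ) ≤ ∑ π : Equiv.Perm (Fin n), ∑ a : Fin n → J, (tau v π a ((π i : ℕ) + 1) : ℝ) :=
    fun i => Finset.sum_nonneg fun π _ => Finset.sum_nonneg fun a _ => hτ_nonneg π a i
  constructor
  · have hswap : ∑ i : Fin n, ∑ π : Equiv.Perm (Fin n), ∑ a : Fin n → J,
        (tau v π a ((π i : ℕ) + 1) : ℝ) = D := by
      rw [Finset.sum_comm, ← hconst]
      refine Finset.sum_congr rfl fun π _ => ?_
      rw [Finset.sum_comm]
      exact Finset.sum_congr rfl fun a _ => sum_tau v π a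
    simp only [phi, ← Finset.mul_sum]
    rw [hswap, one_div, inv_mul_cancel₀ (ne_of_gt hDpos)]
  · intro i
    constructor
    · exact mul_nonneg (by positivity) (hSnonneg i)
    · calc phi v i ≤ (1 / D) * D := by
            exact mul_le_mul_of_nonneg_left (hSle i) (by positivity)
          _ = 1 := by field_simp
end

section
/- If player i is a null player in a (J,K) game v (i.e., the value of v never depends on the i-th coordinate), then τ_h(v,π,a) = 0 whenever π(i) = h, for all permutations π and all input vectors a; consequently the influence measure φ_i(v) = 0. -/
open Finset

/-- A null player never reduces the uncertainty, hence has influence measure `0`. -/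
theorem null_player_phi_zero {n : ℕ} {J K : Type*} [Fintype J] [DecidableEq J]
    [DecidableEq K] (v : (Fin n → J) → K) (i : Fin n)
    (hnull : ∀ (a : Fin n → J) (x : J), v (Function.update a i x) = v a) :
    (∀ (π : Equiv.Perm (Fin n)) (a : Fin n → J), tau v π a ((π i : ℕ) + 1) = 0) ∧
      phi v i = 0 := by
  have key : ∀ (π : Equiv.Perm (Fin n)) (a : Fin n → J),
      outcomes v π a ((π i : ℕ) + 1) = outcomes v π a (π i : ℕ) := by
    intro π a
    apply le_antisymm
    · apply Finset.image_subset_image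
      intro a' ha'
      simp only [Finset.mem_filter, Finset.mem_univ, true_and] at ha' ⊢
      exact fun l hl => ha' l (Nat.lt_succ_of_lt hl)
    · intro k hk
      simp only [outcomes, Finset.mem_image, Finset.mem_filter, Finset.mem_univ,
        true_and] at hk ⊢
      obtain ⟨a', ha', rfl⟩ := hk
      refine ⟨Function.update a' i (a i), ?_, hnull a' (a i)⟩
      intro l hl
      rcases Nat.lt_succ_iff_lt_or_eq.mp hl with h | h
      · have hli : l ≠ i := by
          intro h'; subst h'; exact lt_irrefl _ h
        rw [Function.update_of_ne hli]
        exact ha' l h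
      · have : l = i := π.injective (Fin.ext h)
        subst this
        simp [Function.update_self]
  have htau : ∀ (π : Equiv.Perm (Fin n)) (a : Fin n → J),
      tau v π a ((π i : ℕ) + 1) = 0 := by
    intro π a
    simp [tau, key π a]
  refine ⟨htau, ?_⟩
  simp [phi, htau]
end

section
/- Let v : {1,2}^n → {1,2} be a monotone surjective map corresponding to a simple game ṽ on player set N = {1,…,n}, and fix a player i and an integer h with 0 ≤ h ≤ n. Then C(n,h) · ∑_{S is an i-swing} |S|!·(n−1−|S|)! equals the number of pairs (π, a) with π a permutation of N, a ∈ {1,2}^n having exactly h coordinates equal to 2, such that player i is pivotal for (π, a), i.e., (v̄_{π,p-1}(a) − v̲_{π,p-1}(a)) − (v̄_{π,p}(a) − v̲_{π,p}(a)) = 1 where p = π^{-1}(i). -/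
open Finset

/-- Votes `{1,2}` encoded as `Fin 2` (`1 ↦ 0`, `2 ↦ 1`). Maximal extension. -/
def vbar {n : ℕ} (v : (Fin n → Fin 2) → Fin 2) (π : Equiv.Perm (Fin n))
    (a : Fin n → Fin 2) (h : ℕ) : Fin 2 :=
  v (fun l => if (π l : ℕ) < h then a l else 1)

/-- Minimal extension. -/
def vbot {n : ℕ} (v : (Fin n → Fin 2) → Fin 2) (π : Equiv.Perm (Fin n))
    (a : Fin n → Fin 2) (h : ℕ) : Fin 2 :=
  v (fun l => if (π l : ℕ) < h then a l else 0)

/-- Characteristic vector of a coalition `S` ("yes" = `1 : Fin 2`). -/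
def charVec {n : ℕ} (S : Finset (Fin n)) : Fin n → Fin 2 :=
  fun l => if l ∈ S then 1 else 0

/-- Player `i` is pivotal for `(π, a)` in `v`. -/
def Pivotal {n : ℕ} (v : (Fin n → Fin 2) → Fin 2) (π : Equiv.Perm (Fin n))
    (a : Fin n → Fin 2) (i : Fin n) : Prop :=
  (((vbar v π a (π i) : ℕ) : ℤ) - ((vbot v π a (π i) : ℕ) : ℤ)) -
    (((vbar v π a ((π i : ℕ) + 1) : ℕ) : ℤ) - ((vbot v π a ((π i : ℕ) + 1) : ℕ) : ℤ)) = 1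

instance {n : ℕ} (v : (Fin n → Fin 2) → Fin 2) (π : Equiv.Perm (Fin n))
    (a : Fin n → Fin 2) (i : Fin n) : Decidable (Pivotal v π a i) := by
  unfold Pivotal; infer_instance


lemma Wbase (t : ℕ) : ∀ r, ∑ m ∈ range (r+1), (t + m).choose m = (t + r + 1).choose r := by
  intro r
  induction r with
  | zero => simp
  | succ r ih =>
      rw [Finset.sum_range_succ, ih]
      have e2 : t + (r+1) = t + r + 1 := by omega
      have e1 : t + (r+1) + 1 = (t + r + 1) + 1 := by omega
      rw [e1, e2, Nat.choose_succ_succ (t+r+1) r]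

lemma Wident (s : ℕ) : ∀ r t, ∑ m ∈ range (r+1), (s + m).choose m * (t + (r - m)).choose (r - m)
    = (s + t + r + 1).choose r := by
  induction s with
  | zero =>
      intro r t
      have h1 : ∀ m ∈ range (r+1), (0 + m).choose m * (t + (r - m)).choose (r - m)
          = (t + (r - m)).choose (r - m) := by
        intro m _; simp
      rw [Finset.sum_congr rfl h1]
      have h2 := Finset.sum_range_reflect (fun m => (t + m).choose m) (r+1)
      simp only [Nat.add_sub_cancel] at h2
      rw [h2, Wbase t r]
      congr 1; omega
  | succ s ih =>
      intro r t
      induction r with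
      | zero => simp
      | succ r ihr =>
          rw [Finset.sum_range_succ' (fun m => (s + 1 + m).choose m * (t + (r + 1 - m)).choose (r + 1 - m)) (r+1)]
          have step : ∀ k ∈ range (r+1),
              (s + 1 + (k+1)).choose (k+1) * (t + (r + 1 - (k+1))).choose (r + 1 - (k+1))
              = (s + (k+1)).choose (k+1) * (t + (r - k)).choose (r - k)
                + (s + 1 + k).choose k * (t + (r - k)).choose (r - k) := by
            intro k _
            have h1 : r + 1 - (k+1) = r - k := by omega
            have h2 : s + 1 + (k+1) = (s + (k+1)) + 1 := by omega
            rw [h1, h2, Nat.choose_succ_succ' (s + (k+1)) k]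
            have h3 : s + (k+1) = s + 1 + k := by omega
            rw [h3]; ring
          rw [Finset.sum_congr rfl step, Finset.sum_add_distrib]
          -- first sum: ∑_{k∈range(r+1)} (s+(k+1)).choose (k+1) * (t+(r-k)).choose (r-k)
          -- equals ih(r+1) minus its k=0 term
          have ihr1 := ih (r+1) t
          rw [Finset.sum_range_succ' (fun m => (s + m).choose m * (t + (r + 1 - m)).choose (r + 1 - m)) (r+1)] at ihr1
          have h4 : ∀ k ∈ range (r+1), (s + (k+1)).choose (k+1) * (t + (r + 1 - (k+1))).choose (r + 1 - (k+1))
              = (s + (k+1)).choose (k+1) * (t + (r - k)).choose (r - k) := by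
            intro k _
            have h1 : r + 1 - (k+1) = r - k := by omega
            rw [h1]
          rw [Finset.sum_congr rfl h4] at ihr1
          -- ihr : second sum equals (s+1+t+r+1).choose r
          rw [ihr]
          -- remaining arithmetic with ihr1
          simp only [Nat.add_zero, Nat.choose_zero_right, Nat.add_sub_cancel, one_mul,
            Nat.sub_zero] at ihr1 ⊢
          have pas : (s+t+r+3).choose (r+1) = (s+t+r+2).choose r + (s+t+r+2).choose (r+1) := by
            have := Nat.choose_succ_succ (s+t+r+2) r
            simpa [Nat.succ_eq_add_one] using this
          have g1 : s+1+t+(r+1)+1 = s+t+r+3 := by omega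
          have g2 : s+1+t+r+1 = s+t+r+2 := by omega
          have g3 : s+t+(r+1)+1 = s+t+r+2 := by omega
          rw [g1, g2, pas]
          rw [g3] at ihr1
          omega

lemma V1 (r s t : ℕ) : ∑ m ∈ range (r+1), (s + m).choose m * (r - m).choose t
    = (r + s + 1).choose (s + t + 1) := by
  rcases le_or_gt t r with ht | ht
  · have hsub : range ((r - t) + 1) ⊆ range (r + 1) := by
      apply Finset.range_subset_range.mpr; omega
    have hz : ∀ m ∈ range (r+1), m ∉ range ((r-t)+1) →
        (s + m).choose m * (r - m).choose t = 0 := by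
      intro m hm hm'
      simp only [Finset.mem_range] at hm hm'
      have : r - m < t := by omega
      rw [Nat.choose_eq_zero_of_lt this, mul_zero]
    rw [← Finset.sum_subset hsub hz]
    have hc : ∀ m ∈ range ((r-t)+1),
        (s + m).choose m * (r - m).choose t
        = (s + m).choose m * (t + ((r - t) - m)).choose ((r - t) - m) := by
      intro m hm
      simp only [Finset.mem_range] at hm
      have h1 : t ≤ r - m := by omega
      have h2 : (r - m) - t = (r - t) - m := by omega
      have h3 : t + ((r - t) - m) = r - m := by omega
      rw [h3, ← Nat.choose_symm h1, h2]
    rw [Finset.sum_congr rfl hc, Wident s (r-t) t]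
    have h4 : s + t + (r - t) + 1 = r + s + 1 := by omega
    rw [h4]
    have h5 : r - t ≤ r + s + 1 := by omega
    have h6 : (r + s + 1) - (r - t) = s + t + 1 := by omega
    rw [← Nat.choose_symm h5, h6]
  · have hz : ∀ m ∈ range (r+1), (s + m).choose m * (r - m).choose t = 0 := by
      intro m hm
      rw [Nat.choose_eq_zero_of_lt (by omega : r - m < t), mul_zero]
    rw [Finset.sum_eq_zero hz, Nat.choose_eq_zero_of_lt (by omega : r + s + 1 < s + t + 1)]

lemma V2 (r s h : ℕ) (hh : h ≤ s) : ∑ m ∈ range (h+1), (r + m).choose m * (s - m).choose (h - m)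
    = (r + s + 1).choose h := by
  have hc : ∀ m ∈ range (h+1), (r + m).choose m * (s - m).choose (h - m)
      = (r + m).choose m * ((s - h) + (h - m)).choose (h - m) := by
    intro m hm
    simp only [Finset.mem_range] at hm
    have : (s - h) + (h - m) = s - m := by omega
    rw [this]
  rw [Finset.sum_congr rfl hc, Wident r h (s - h)]
  congr 1
  omega

def colorEquiv {α β γ : Type*} (f : α → γ) (g : β → γ) :
    {e : α ≃ β // ∀ x, g (e x) = f x} ≃ (∀ c : γ, {x // f x = c} ≃ {y // g y = c}) where
  toFun e := fun c => Equiv.subtypeEquiv e.1 (fun x => by rw [e.2 x])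
  invFun F := ⟨Equiv.ofFiberEquiv F, fun x => Equiv.ofFiberEquiv_map F x⟩
  left_inv e := by
    apply Subtype.ext
    apply Equiv.ext
    intro x
    simp [Equiv.ofFiberEquiv, Equiv.sigmaFiberEquiv, Equiv.subtypeEquiv]
  right_inv F := by
    funext c
    apply Equiv.ext
    rintro ⟨x, hx⟩
    apply Subtype.ext
    subst hx
    simp [Equiv.ofFiberEquiv, Equiv.sigmaFiberEquiv, Equiv.subtypeEquiv]

lemma card_colorEquiv {α β γ : Type*} [Fintype α] [Fintype β] [Fintype γ]
    [DecidableEq α] [DecidableEq β] [DecidableEq γ] (f : α → γ) (g : β → γ)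
    (hc : ∀ c, Fintype.card {x // f x = c} = Fintype.card {y // g y = c}) :
    Fintype.card {e : α ≃ β // ∀ x, g (e x) = f x}
      = ∏ c : γ, (Fintype.card {x // f x = c}).factorial := by
  rw [Fintype.card_congr (colorEquiv f g), Fintype.card_pi]
  refine Finset.prod_congr rfl fun c _ => ?_
  rw [Fintype.card_equiv (Fintype.equivOfCardEq (hc c))]

def lowset {n : ℕ} (π : Equiv.Perm (Fin n)) (i : Fin n) : Finset (Fin n) :=
  univ.filter fun l => (π l : ℕ) < (π i : ℕ)

lemma lowset_card {n : ℕ} (π : Equiv.Perm (Fin n)) (i : Fin n) :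
    (lowset π i).card = (π i : ℕ) := by
  have : (lowset π i).card = (Finset.range (π i : ℕ)).card := by
    apply Finset.card_bij (fun l _ => (π l : ℕ))
    · intro a ha; simp only [lowset, mem_filter] at ha; simp [ha.2]
    · intro a ha b hb hab
      exact π.injective (Fin.val_injective hab)
    · intro j hj
      simp only [Finset.mem_range] at hj
      have hjn : j < n := lt_trans hj (π i).isLt
      refine ⟨π.symm ⟨j, hjn⟩, ?_, by simp⟩
      simp only [lowset, mem_filter, mem_univ, true_and, Equiv.apply_symm_apply]
      exact hj
  rw [this, Finset.card_range]

lemma filter_val_lt_card {n : ℕ} (p : ℕ) (hp : p ≤ n) :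
    (univ.filter fun m : Fin n => (m : ℕ) < p).card = p := by
  have : (univ.filter fun m : Fin n => (m : ℕ) < p).card = (Finset.range p).card := by
    apply Finset.card_bij (fun (m : Fin n) (_ : m ∈ univ.filter fun m : Fin n => (m : ℕ) < p) => (m : ℕ))
    · intro a ha; simp only [mem_filter] at ha; simp [ha.2]
    · intro a _ b _ hab; exact Fin.val_injective hab
    · intro j hj
      simp only [Finset.mem_range] at hj
      exact ⟨⟨j, lt_of_lt_of_le hj hp⟩, by simp [hj], rfl⟩
  rw [this, Finset.card_range]

lemma card_lowset_eq {n : ℕ} (i : Fin n) (L : Finset (Fin n)) (hiL : i ∉ L) :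
    (univ.filter fun π : Equiv.Perm (Fin n) => lowset π i = L).card
      = (L.card).factorial * (n - 1 - L.card).factorial := by
  have hn : 0 < n := i.pos
  set p := L.card with hp
  have hLsub : L ⊆ univ.erase i := fun x hx => Finset.mem_erase.mpr ⟨fun h => hiL (h ▸ hx), mem_univ x⟩
  have hpn : p < n := by
    have := Finset.card_le_card hLsub
    rw [Finset.card_erase_of_mem (mem_univ i), Finset.card_univ, Fintype.card_fin] at this
    omega
  set f : Fin n → Fin 3 := fun x => if x ∈ L then 0 else if x = i then 1 else 2 with hf
  set g : Fin n → Fin 3 := fun y => if (y : ℕ) < p then 0 else if (y : ℕ) = p then 1 else 2 with hg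
  have hiff : ∀ π : Equiv.Perm (Fin n), lowset π i = L ↔ ∀ x, g (π x) = f x := by
    intro π
    constructor
    · intro hL
      have hpi : (π i : ℕ) = p := by rw [← lowset_card π i, hL]
      intro x
      by_cases hx : x ∈ L
      · have hlt : (π x : ℕ) < (π i : ℕ) := by
          have hm : x ∈ lowset π i := hL ▸ hx
          simp only [lowset, mem_filter, mem_univ, true_and] at hm
          exact hm
        simp [hf, hg, hx, hpi ▸ hlt]
      · by_cases hxi : x = i
        · subst hxi
          simp [hf, hg, hx, hpi]
        · have hnotlow : ¬ ((π x : ℕ) < (π i : ℕ)) := by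
            intro hlt
            have hm : x ∈ lowset π i := by
              simp only [lowset, mem_filter, mem_univ, true_and]
              exact hlt
            exact hx (hL ▸ hm)
          have hne : (π x : ℕ) ≠ p := by
            intro he
            exact hxi (π.injective (Fin.val_injective (by rw [he, hpi])))
          simp only [hf, hg]
          rw [if_neg hx, if_neg hxi, if_neg (by omega : ¬ ((π x : ℕ) < p)), if_neg hne]
    · intro hgf
      have hpi : (π i : ℕ) = p := by
        have h1 := hgf i
        simp only [hf, hg, if_neg hiL, if_pos rfl] at h1
        by_cases h2 : (π i : ℕ) < p
        · rw [if_pos h2] at h1; exact absurd h1 (by decide)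
        · rw [if_neg h2] at h1
          by_cases h3 : (π i : ℕ) = p
          · exact h3
          · rw [if_neg h3] at h1; exact absurd h1 (by decide)
      ext x
      simp only [lowset, mem_filter, mem_univ, true_and]
      constructor
      · intro hlt
        have h1 := hgf x
        by_cases hx : x ∈ L
        · exact hx
        · exfalso
          by_cases hxi : x = i
          · subst hxi; omega
          · simp only [hf, hg, if_neg hx, if_neg hxi] at h1
            rw [if_pos (by omega : (π x : ℕ) < p)] at h1
            exact absurd h1 (by decide)
      · intro hx
        have h1 := hgf x
        simp only [hf, hg, if_pos hx] at h1
        by_cases h2 : (π x : ℕ) < p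
        · omega
        · rw [if_neg h2] at h1
          by_cases h3 : (π x : ℕ) = p
          · rw [if_pos h3] at h1; exact absurd h1 (by decide)
          · rw [if_neg h3] at h1; exact absurd h1 (by decide)
  have hf0 : Fintype.card {x : Fin n // f x = 0} = p := by
    have he : univ.filter (fun x => f x = 0) = L := by
      ext x
      simp only [mem_filter, mem_univ, true_and, hf]
      by_cases hx : x ∈ L
      · simp [hx]
      · by_cases hxi : x = i
        · subst hxi
          simp only [if_neg hiL, if_pos rfl]
          constructor
          · intro hcon; exact absurd hcon (by decide)
          · intro hcon; exact absurd hcon hiL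
        · simp only [if_neg hx, if_neg hxi]
          constructor
          · intro hcon; exact absurd hcon (by decide)
          · intro hcon; exact absurd hcon hx
    rw [Fintype.card_subtype, he]
  have hf1 : Fintype.card {x : Fin n // f x = 1} = 1 := by
    have he : univ.filter (fun x => f x = 1) = {i} := by
      ext x
      simp only [mem_filter, mem_univ, true_and, Finset.mem_singleton, hf]
      by_cases hx : x ∈ L
      · simp only [if_pos hx]
        constructor
        · intro hcon; exact absurd hcon (by decide)
        · intro hxe; exact absurd (hxe ▸ hx) hiL
      · by_cases hxi : x = i
        · subst hxi
          simp only [if_neg hiL, if_pos rfl]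
          simp
        · simp only [if_neg hx, if_neg hxi]
          constructor
          · intro hcon; exact absurd hcon (by decide)
          · intro hxe; exact absurd hxe hxi
    rw [Fintype.card_subtype, he, Finset.card_singleton]
  have hf2 : Fintype.card {x : Fin n // f x = 2} = n - 1 - p := by
    have he : univ.filter (fun x => f x = 2) = (univ.erase i) \ L := by
      ext x
      simp only [mem_filter, mem_univ, true_and, Finset.mem_sdiff, Finset.mem_erase, hf]
      by_cases hx : x ∈ L
      · simp only [if_pos hx]
        constructor
        · intro hcon; exact absurd hcon (by decide)
        · intro hcon; exact absurd hx hcon.2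
      · by_cases hxi : x = i
        · simp only [if_neg hx, if_pos hxi]
          constructor
          · intro hcon; exact absurd hcon (by decide)
          · intro hcon; exact absurd hxi hcon.1.1
        · simp [hx, hxi]
    rw [Fintype.card_subtype, he, Finset.card_sdiff_of_subset hLsub,
      Finset.card_erase_of_mem (mem_univ i), Finset.card_univ, Fintype.card_fin]
  have hg0 : Fintype.card {y : Fin n // g y = 0} = p := by
    have he : univ.filter (fun y => g y = 0) = univ.filter (fun m : Fin n => (m : ℕ) < p) := by
      ext y
      simp only [mem_filter, mem_univ, true_and, hg]
      by_cases h2 : (y : ℕ) < p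
      · simp [h2]
      · by_cases h3 : (y : ℕ) = p <;> simp [h2, h3]
    rw [Fintype.card_subtype, he, filter_val_lt_card p (le_of_lt hpn)]
  have hg1 : Fintype.card {y : Fin n // g y = 1} = 1 := by
    have he : univ.filter (fun y => g y = 1) = {(⟨p, hpn⟩ : Fin n)} := by
      ext y
      have hy : (y = (⟨p, hpn⟩ : Fin n)) ↔ (y : ℕ) = p := by
        rw [Fin.ext_iff]
      simp only [mem_filter, mem_univ, true_and, Finset.mem_singleton, hg, hy]
      by_cases h2 : (y : ℕ) < p
      · simp only [if_pos h2]
        constructor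
        · intro hcon; exact absurd hcon (by decide)
        · intro hcon; omega
      · by_cases h3 : (y : ℕ) = p
        · simp [h2, h3]
        · simp only [if_neg h2, if_neg h3]
          constructor
          · intro hcon; exact absurd hcon (by decide)
          · intro hcon; exact absurd hcon h3
    rw [Fintype.card_subtype, he, Finset.card_singleton]
  have filter_val_gt : (univ.filter fun m : Fin n => p < (m : ℕ)).card = n - 1 - p := by
    have : (univ.filter fun m : Fin n => p < (m : ℕ)).card = (Finset.range (n - 1 - p)).card := by
      apply Finset.card_bij (fun (m : Fin n) (_ : m ∈ univ.filter fun m : Fin n => p < (m : ℕ)) => (m : ℕ) - p - 1)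
      · intro a ha
        simp only [mem_filter, mem_univ, true_and] at ha
        simp only [Finset.mem_range]
        omega
      · intro a ha b hb hab
        simp only [mem_filter, mem_univ, true_and] at ha hb
        apply Fin.val_injective
        omega
      · intro j hj
        simp only [Finset.mem_range] at hj
        refine ⟨⟨j + p + 1, by omega⟩, ?_, ?_⟩
        · simp only [mem_filter, mem_univ, true_and]
          omega
        · show j + p + 1 - p - 1 = j
          omega
    rw [this, Finset.card_range]
  have hg2 : Fintype.card {y : Fin n // g y = 2} = n - 1 - p := by
    have he : univ.filter (fun y => g y = 2) = univ.filter (fun m : Fin n => p < (m : ℕ)) := by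
      ext y
      simp only [mem_filter, mem_univ, true_and, hg]
      by_cases h2 : (y : ℕ) < p
      · simp only [if_pos h2]
        constructor
        · intro hcon; exact absurd hcon (by decide)
        · intro hcon; omega
      · by_cases h3 : (y : ℕ) = p
        · simp only [if_neg h2, if_pos h3]
          constructor
          · intro hcon; exact absurd hcon (by decide)
          · intro hcon; omega
        · simp only [if_neg h2, if_neg h3]
          constructor
          · intro _; omega
          · intro _; trivial
    rw [Fintype.card_subtype, he, filter_val_gt]
  have hc : ∀ c : Fin 3, Fintype.card {x : Fin n // f x = c} = Fintype.card {y : Fin n // g y = c} := by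
    intro c
    fin_cases c
    · exact hf0.trans hg0.symm
    · exact hf1.trans hg1.symm
    · exact hf2.trans hg2.symm
  have hcount := card_colorEquiv f g hc
  rw [Fin.prod_univ_three, hf0, hf1, hf2] at hcount
  have hfilter : (univ.filter fun π : Equiv.Perm (Fin n) => lowset π i = L)
      = (univ.filter fun π : Equiv.Perm (Fin n) => ∀ x, g (π x) = f x) :=
    Finset.filter_congr (fun π _ => hiff π)
  rw [hfilter, ← Fintype.card_subtype]
  rw [Nat.factorial_one, mul_one] at hcount
  convert hcount using 2 <;> first | rfl | exact Subsingleton.elim _ _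

def swL {n : ℕ} (i : Fin n) (L : Finset (Fin n)) (a : Fin n → Fin 2) : Finset (Fin n) :=
  univ.filter fun l => (l ∈ L ∧ a l = 1) ∨ (l ∉ L ∧ l ≠ i ∧ a i = 0)

lemma fin2cases (b : Fin 2) : b = 0 ∨ b = 1 := by revert b; decide

lemma i_notMem_swL {n : ℕ} (i : Fin n) (L : Finset (Fin n)) (hiL : i ∉ L) (a : Fin n → Fin 2) :
    i ∉ swL i L a := by
  simp only [swL, mem_filter, mem_univ, true_and]
  rintro (⟨h1, _⟩ | ⟨_, h2, _⟩)
  · exact hiL h1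
  · exact h2 rfl

lemma i_notMem_lowset {n : ℕ} (π : Equiv.Perm (Fin n)) (i : Fin n) : i ∉ lowset π i := by
  simp [lowset]

lemma pivotal_iff {n : ℕ} (v : (Fin n → Fin 2) → Fin 2) (π : Equiv.Perm (Fin n))
    (a : Fin n → Fin 2) (i : Fin n) :
    Pivotal v π a i ↔
      (v (charVec (insert i (swL i (lowset π i) a))) = 1 ∧ v (charVec (swL i (lowset π i) a)) = 0) := by
  have hmem : ∀ l, l ∈ lowset π i ↔ (π l : ℕ) < (π i : ℕ) := by
    intro l; simp [lowset]
  have hvalne : ∀ l : Fin n, l ≠ i → (π l : ℕ) ≠ (π i : ℕ) := by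
    intro l hl h
    exact hl (π.injective (Fin.val_injective h))
  have hchar : ∀ (l : Fin n) (S : Finset (Fin n)), charVec S l = if l ∈ S then 1 else 0 := by
    intro l S; rfl
  rcases fin2cases (a i) with hai | hai
  · -- a i = 0
    have F1 : vbot v π a ((π i : ℕ) + 1) = vbot v π a (π i) := by
      unfold vbot
      apply congrArg v
      funext l
      by_cases hli : l = i
      · subst hli
        rw [if_pos (by omega), if_neg (by omega), hai]
      · have := hvalne l hli
        by_cases hlt : (π l : ℕ) < (π i : ℕ)
        · rw [if_pos (by omega), if_pos hlt]
        · rw [if_neg (by omega), if_neg hlt]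
    have F2 : vbar v π a (π i) = v (charVec (insert i (swL i (lowset π i) a))) := by
      unfold vbar
      apply congrArg v
      funext l
      rw [hchar]
      by_cases hli : l = i
      · subst hli
        rw [if_neg (by omega), if_pos (Finset.mem_insert_self _ _)]
      · have hne := hvalne l hli
        have hm : l ∈ insert i (swL i (lowset π i) a) ↔
            ((π l : ℕ) < (π i : ℕ) ∧ a l = 1) ∨ ¬ ((π l : ℕ) < (π i : ℕ)) := by
          simp only [Finset.mem_insert, swL, mem_filter, mem_univ, true_and, hmem]
          constructor
          · rintro (h | ⟨h1, h2⟩ | ⟨h1, _, _⟩)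
            · exact absurd h hli
            · exact Or.inl ⟨h1, h2⟩
            · exact Or.inr h1
          · rintro (⟨h1, h2⟩ | h1)
            · exact Or.inr (Or.inl ⟨h1, h2⟩)
            · exact Or.inr (Or.inr ⟨h1, hli, hai⟩)
        by_cases hlt : (π l : ℕ) < (π i : ℕ)
        · rw [if_pos hlt]
          rcases fin2cases (a l) with hal | hal
          · rw [if_neg, hal]
            rw [hm]
            rintro (⟨_, h2⟩ | h1)
            · rw [hal] at h2; exact absurd h2 (by decide)
            · exact h1 hlt
          · rw [if_pos, hal]
            rw [hm]
            exact Or.inl ⟨hlt, hal⟩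
        · rw [if_neg hlt, if_pos]
          rw [hm]
          exact Or.inr hlt
    have F3 : vbar v π a ((π i : ℕ) + 1) = v (charVec (swL i (lowset π i) a)) := by
      unfold vbar
      apply congrArg v
      funext l
      rw [hchar]
      by_cases hli : l = i
      · rw [hli, if_pos (by omega), hai,
          if_neg (i_notMem_swL i _ (i_notMem_lowset π i) a)]
      · have hne := hvalne l hli
        have hm : l ∈ swL i (lowset π i) a ↔
            ((π l : ℕ) < (π i : ℕ) ∧ a l = 1) ∨ ¬ ((π l : ℕ) < (π i : ℕ)) := by
          simp only [swL, mem_filter, mem_univ, true_and, hmem]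
          constructor
          · rintro (⟨h1, h2⟩ | ⟨h1, _, _⟩)
            · exact Or.inl ⟨h1, h2⟩
            · exact Or.inr h1
          · rintro (⟨h1, h2⟩ | h1)
            · exact Or.inl ⟨h1, h2⟩
            · exact Or.inr ⟨h1, hli, hai⟩
        by_cases hlt : (π l : ℕ) < (π i : ℕ)
        · rw [if_pos (by omega)]
          rcases fin2cases (a l) with hal | hal
          · rw [if_neg, hal]
            rw [hm]
            rintro (⟨_, h2⟩ | h1)
            · rw [hal] at h2; exact absurd h2 (by decide)
            · exact h1 hlt
          · rw [if_pos, hal]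
            rw [hm]
            exact Or.inl ⟨hlt, hal⟩
        · rw [if_neg (by omega), if_pos]
          rw [hm]
          exact Or.inr hlt
    unfold Pivotal
    rw [F1, F2, F3]
    rcases fin2cases (v (charVec (insert i (swL i (lowset π i) a)))) with h1 | h1 <;>
      rcases fin2cases (v (charVec (swL i (lowset π i) a))) with h2 | h2 <;>
      rw [h1, h2] <;> simp <;> omega
  · -- a i = 1
    have E1 : vbar v π a ((π i : ℕ) + 1) = vbar v π a (π i) := by
      unfold vbar
      apply congrArg v
      funext l
      by_cases hli : l = i
      · subst hli
        rw [if_pos (by omega), if_neg (by omega), hai]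
      · have := hvalne l hli
        by_cases hlt : (π l : ℕ) < (π i : ℕ)
        · rw [if_pos (by omega), if_pos hlt]
        · rw [if_neg (by omega), if_neg hlt]
    have E2 : vbot v π a ((π i : ℕ) + 1) = v (charVec (insert i (swL i (lowset π i) a))) := by
      unfold vbot
      apply congrArg v
      funext l
      rw [hchar]
      by_cases hli : l = i
      · subst hli
        rw [if_pos (by omega), hai, if_pos (Finset.mem_insert_self _ _)]
      · have hne := hvalne l hli
        have hm : l ∈ insert i (swL i (lowset π i) a) ↔
            ((π l : ℕ) < (π i : ℕ) ∧ a l = 1) := by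
          simp only [Finset.mem_insert, swL, mem_filter, mem_univ, true_and, hmem]
          constructor
          · rintro (h | ⟨h1, h2⟩ | ⟨_, _, h3⟩)
            · exact absurd h hli
            · exact ⟨h1, h2⟩
            · rw [hai] at h3; exact absurd h3 (by decide)
          · rintro ⟨h1, h2⟩
            exact Or.inr (Or.inl ⟨h1, h2⟩)
        by_cases hlt : (π l : ℕ) < (π i : ℕ)
        · rw [if_pos (by omega)]
          rcases fin2cases (a l) with hal | hal
          · rw [if_neg, hal]
            rw [hm]
            rintro ⟨_, h2⟩
            rw [hal] at h2; exact absurd h2 (by decide)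
          · rw [if_pos, hal]
            rw [hm]
            exact ⟨hlt, hal⟩
        · rw [if_neg (by omega), if_neg]
          rw [hm]
          rintro ⟨h1, _⟩
          exact hlt h1
    have E3 : vbot v π a (π i) = v (charVec (swL i (lowset π i) a)) := by
      unfold vbot
      apply congrArg v
      funext l
      rw [hchar]
      by_cases hli : l = i
      · rw [hli, if_neg (by omega), if_neg (i_notMem_swL i _ (i_notMem_lowset π i) a)]
      · have hne := hvalne l hli
        have hm : l ∈ swL i (lowset π i) a ↔
            ((π l : ℕ) < (π i : ℕ) ∧ a l = 1) := by
          simp only [swL, mem_filter, mem_univ, true_and, hmem]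
          constructor
          · rintro (⟨h1, h2⟩ | ⟨_, _, h3⟩)
            · exact ⟨h1, h2⟩
            · rw [hai] at h3; exact absurd h3 (by decide)
          · rintro ⟨h1, h2⟩
            exact Or.inl ⟨h1, h2⟩
        by_cases hlt : (π l : ℕ) < (π i : ℕ)
        · rw [if_pos hlt]
          rcases fin2cases (a l) with hal | hal
          · rw [if_neg, hal]
            rw [hm]
            rintro ⟨_, h2⟩
            rw [hal] at h2; exact absurd h2 (by decide)
          · rw [if_pos, hal]
            rw [hm]
            exact ⟨hlt, hal⟩
        · rw [if_neg hlt, if_neg]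
          rw [hm]
          rintro ⟨h1, _⟩
          exact hlt h1
    unfold Pivotal
    rw [E1, E2, E3]
    rcases fin2cases (v (charVec (insert i (swL i (lowset π i) a)))) with h1 | h1 <;>
      rcases fin2cases (v (charVec (swL i (lowset π i) a))) with h2 | h2 <;>
      rw [h1, h2] <;> simp <;> omega

lemma swL_of_ai1 {n : ℕ} (i : Fin n) (L : Finset (Fin n)) (a : Fin n → Fin 2)
    (hai : a i = 1) : swL i L a = L ∩ (univ.filter fun l => a l = 1) := by
  ext x
  simp only [swL, mem_filter, mem_univ, true_and, Finset.mem_inter]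
  constructor
  · rintro (⟨h1, h2⟩ | ⟨_, _, h3⟩)
    · exact ⟨h1, h2⟩
    · rw [hai] at h3; exact absurd h3 (by decide)
  · rintro ⟨h1, h2⟩
    exact Or.inl ⟨h1, h2⟩

lemma charVec_mem_iff {n : ℕ} (X : Finset (Fin n)) (l : Fin n) : charVec X l = 1 ↔ l ∈ X := by
  simp only [charVec]
  by_cases hl : l ∈ X
  · simp [hl]
  · simp only [if_neg hl]
    constructor
    · intro hcon; exact absurd hcon (by decide)
    · intro hcon; exact absurd hcon hl

lemma filter_charVec {n : ℕ} (X : Finset (Fin n)) :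
    univ.filter (fun l => charVec X l = 1) = X := by
  ext x; simp [charVec_mem_iff]

lemma charVec_filter {n : ℕ} (a : Fin n → Fin 2) :
    charVec (univ.filter fun l => a l = 1) = a := by
  funext l
  simp only [charVec, mem_filter, mem_univ, true_and]
  rcases fin2cases (a l) with hal | hal
  · rw [if_neg, hal]
    rw [hal]; decide
  · rw [if_pos hal, hal]

/-- Cardinality fact for the reservoir. -/

lemma card_R {n : ℕ} (i : Fin n) (S : Finset (Fin n)) (hiS : i ∉ S) :
    ((univ.erase i) \ S).card = n - 1 - S.card := by
  have hSsub : S ⊆ univ.erase i := fun x hx =>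
    Finset.mem_erase.mpr ⟨fun hx2 => hiS (hx2 ▸ hx), mem_univ x⟩
  rw [Finset.card_sdiff_of_subset hSsub, Finset.card_erase_of_mem (mem_univ i), Finset.card_univ,
    Fintype.card_fin]

lemma term1 (r s t m : ℕ) (hm : m ≤ r) :
    r.choose m * ((r - m).choose t * ((s + m).factorial * (r - m).factorial))
      = s.factorial * r.factorial * ((s + m).choose m * (r - m).choose t) := by
  have h1 : r.choose m * m.factorial * (r - m).factorial = r.factorial :=
    Nat.choose_mul_factorial_mul_factorial hm
  have h2 : (s + m).choose m * m.factorial * s.factorial = (s + m).factorial := by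
    have h3 := Nat.choose_mul_factorial_mul_factorial (Nat.le_add_left m s)
    rw [Nat.add_sub_cancel] at h3
    exact h3
  apply Nat.eq_of_mul_eq_mul_right (Nat.factorial_pos m)
  calc r.choose m * ((r - m).choose t * ((s + m).factorial * (r - m).factorial)) * m.factorial
      = (r.choose m * m.factorial * (r - m).factorial) * ((s + m).factorial * (r - m).choose t) := by
        ring
    _ = r.factorial * ((s + m).factorial * (r - m).choose t) := by rw [h1]
    _ = r.factorial * (((s + m).choose m * m.factorial * s.factorial) * (r - m).choose t) := by
        rw [h2]
    _ = s.factorial * r.factorial * ((s + m).choose m * (r - m).choose t) * m.factorial := by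
        ring

lemma part1 {n : ℕ} (v : (Fin n → Fin 2) → Fin 2) (i : Fin n) (h : ℕ) (S : Finset (Fin n))
    (hiS : i ∉ S) :
    ∑ La ∈ univ.filter (fun La : Finset (Fin n) × (Fin n → Fin 2) =>
        (i ∉ La.1 ∧ (univ.filter fun l => La.2 l = 1).card = h ∧ swL i La.1 La.2 = S) ∧ La.2 i = 1),
      (La.1.card.factorial * (n - 1 - La.1.card).factorial)
    = if S.card < h then S.card.factorial * (n - 1 - S.card).factorial * n.choose h else 0 := by
  classical
  have hn : 0 < n := i.pos
  set s := S.card with hs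
  set R := (univ.erase i) \ S with hR
  have hRcard : R.card = n - 1 - s := card_R i S hiS
  have hsn : s ≤ n - 1 := by
    have hSsub : S ⊆ univ.erase i := fun x hx =>
      Finset.mem_erase.mpr ⟨fun hx2 => hiS (hx2 ▸ hx), mem_univ x⟩
    have := Finset.card_le_card hSsub
    rw [Finset.card_erase_of_mem (mem_univ i), Finset.card_univ, Fintype.card_fin] at this
    exact this
  have hiR : i ∉ R := by simp [hR]
  have hRS : ∀ x, x ∈ R → x ∉ S := by
    intro x hx; simp only [hR, Finset.mem_sdiff] at hx; exact hx.2
  have hRi : ∀ x, x ∈ R → x ≠ i := by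
    intro x hx; simp only [hR, Finset.mem_sdiff, Finset.mem_erase] at hx; exact hx.1.1
  -- step A : bijection to pairs of finsets
  have stepA : ∑ La ∈ univ.filter (fun La : Finset (Fin n) × (Fin n → Fin 2) =>
        (i ∉ La.1 ∧ (univ.filter fun l => La.2 l = 1).card = h ∧ swL i La.1 La.2 = S) ∧ La.2 i = 1),
      (La.1.card.factorial * (n - 1 - La.1.card).factorial)
      = ∑ MU ∈ univ.filter (fun MU : Finset (Fin n) × Finset (Fin n) =>
          MU.1 ⊆ R ∧ MU.2 ⊆ R ∧ Disjoint MU.1 MU.2 ∧ s + 1 + MU.2.card = h),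
        ((s + MU.1.card).factorial * (n - 1 - (s + MU.1.card)).factorial) := by
    apply Finset.sum_nbij'
      (i := fun La => (La.1 \ S, (univ.filter fun l => La.2 l = 1) \ (insert i S)))
      (j := fun MU => (S ∪ MU.1, charVec (insert i (S ∪ MU.2))))
    · rintro ⟨L, a⟩ hmem
      simp only [mem_filter, mem_univ, true_and] at hmem
      obtain ⟨⟨hiL, hwt, hsw⟩, hai⟩ := hmem
      rw [swL_of_ai1 i L a hai] at hsw
      set T := univ.filter (fun l => a l = 1) with hT
      have hST : S ⊆ T := by rw [← hsw]; exact Finset.inter_subset_right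
      have hSL : S ⊆ L := by rw [← hsw]; exact Finset.inter_subset_left
      have hiT : i ∈ T := by simp [hT, hai]
      simp only [mem_filter, mem_univ, true_and]
      refine ⟨?_, ?_, ?_, ?_⟩
      · intro x hx
        simp only [Finset.mem_sdiff] at hx
        simp only [hR, Finset.mem_sdiff, Finset.mem_erase]
        exact ⟨⟨fun hxi => hiL (hxi ▸ hx.1), mem_univ x⟩, hx.2⟩
      · intro x hx
        simp only [Finset.mem_sdiff, Finset.mem_insert] at hx
        simp only [hR, Finset.mem_sdiff, Finset.mem_erase]
        push_neg at hx
        exact ⟨⟨hx.2.1, mem_univ x⟩, hx.2.2⟩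
      · rw [Finset.disjoint_left]
        intro x hx1 hx2
        simp only [Finset.mem_sdiff, Finset.mem_insert] at hx1 hx2
        push_neg at hx2
        have : x ∈ L ∩ T := Finset.mem_inter.mpr ⟨hx1.1, hx2.1⟩
        rw [hsw] at this
        exact hx1.2 this
      · have hsubT : insert i S ⊆ T := Finset.insert_subset hiT hST
        have := Finset.card_sdiff_add_card_eq_card hsubT
        rw [Finset.card_insert_of_notMem hiS] at this
        rw [hwt] at this
        omega
    · rintro ⟨M, U⟩ hmem
      simp only [mem_filter, mem_univ, true_and] at hmem
      obtain ⟨hMR, hUR, hdisj, hcard⟩ := hmem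
      have hiM : i ∉ M := fun hx => hiR (hMR hx)
      have hiU : i ∉ U := fun hx => hiR (hUR hx)
      have hMS : ∀ x, x ∈ M → x ∉ S := fun x hx => hRS x (hMR hx)
      have hUS : ∀ x, x ∈ U → x ∉ S := fun x hx => hRS x (hUR hx)
      have hiSU : i ∉ S ∪ U := by
        simp only [Finset.mem_union]
        rintro (hx | hx)
        · exact hiS hx
        · exact hiU hx
      have hai : charVec (insert i (S ∪ U)) i = 1 := by
        rw [charVec_mem_iff]; exact Finset.mem_insert_self _ _
      simp only [mem_filter, mem_univ, true_and]
      refine ⟨⟨?_, ?_, ?_⟩, hai⟩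
      · simp only [Finset.mem_union]
        rintro (hx | hx)
        · exact hiS hx
        · exact hiM hx
      · rw [filter_charVec]
        rw [Finset.card_insert_of_notMem hiSU,
          Finset.card_union_of_disjoint (Finset.disjoint_left.mpr (fun x hx hx2 => hUS x hx2 hx))]
        omega
      · rw [swL_of_ai1 _ _ _ hai, filter_charVec]
        ext x
        simp only [Finset.mem_inter, Finset.mem_union, Finset.mem_insert]
        constructor
        · rintro ⟨h1 | h1, h2 | h2 | h2⟩
          · exact h1
          · exact h1
          · exact h1
          · exact absurd (h2 ▸ h1) hiM
          · exact absurd h2 (hMS x h1)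
          · exact absurd h2 (Finset.disjoint_left.mp hdisj h1)
        · intro hx
          exact ⟨Or.inl hx, Or.inr (Or.inl hx)⟩
    · rintro ⟨L, a⟩ hmem
      simp only [mem_filter, mem_univ, true_and] at hmem
      obtain ⟨⟨hiL, hwt, hsw⟩, hai⟩ := hmem
      rw [swL_of_ai1 i L a hai] at hsw
      set T := univ.filter (fun l => a l = 1) with hT
      have hST : S ⊆ T := by rw [← hsw]; exact Finset.inter_subset_right
      have hSL : S ⊆ L := by rw [← hsw]; exact Finset.inter_subset_left
      have hiT : i ∈ T := by simp [hT, hai]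
      have h1 : S ∪ (L \ S) = L := Finset.union_sdiff_of_subset hSL
      have h2 : insert i (S ∪ (T \ insert i S)) = T := by
        ext x
        simp only [Finset.mem_insert, Finset.mem_union, Finset.mem_sdiff]
        constructor
        · rintro (hx | hx | ⟨hx, _⟩)
          · exact hx ▸ hiT
          · exact hST hx
          · exact hx
        · intro hx
          by_cases hxi : x = i
          · exact Or.inl hxi
          · by_cases hxS : x ∈ S
            · exact Or.inr (Or.inl hxS)
            · refine Or.inr (Or.inr ⟨hx, ?_⟩)
              rintro (hc | hc)
              · exact hxi hc
              · exact hxS hc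
      rw [Prod.ext_iff]
      refine ⟨h1, ?_⟩
      show charVec (insert i (S ∪ ((univ.filter fun l => a l = 1) \ insert i S))) = a
      rw [← hT, h2, hT, charVec_filter]
    · rintro ⟨M, U⟩ hmem
      simp only [mem_filter, mem_univ, true_and] at hmem
      obtain ⟨hMR, hUR, hdisj, hcard⟩ := hmem
      have hiM : i ∉ M := fun hx => hiR (hMR hx)
      have hiU : i ∉ U := fun hx => hiR (hUR hx)
      have hMS : ∀ x, x ∈ M → x ∉ S := fun x hx => hRS x (hMR hx)
      have hUS : ∀ x, x ∈ U → x ∉ S := fun x hx => hRS x (hUR hx)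
      simp only
      rw [filter_charVec]
      have h1 : (S ∪ M) \ S = M := by
        ext x
        simp only [Finset.mem_sdiff, Finset.mem_union]
        constructor
        · rintro ⟨h1 | h1, h2⟩
          · exact absurd h1 h2
          · exact h1
        · intro hx
          exact ⟨Or.inr hx, hMS x hx⟩
      have h2 : (insert i (S ∪ U)) \ (insert i S) = U := by
        ext x
        simp only [Finset.mem_sdiff, Finset.mem_insert, Finset.mem_union]
        constructor
        · rintro ⟨h1 | h1 | h1, h2⟩
          · exact absurd (Or.inl h1) h2
          · exact absurd (Or.inr h1) h2
          · exact h1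
        · intro hx
          refine ⟨Or.inr (Or.inr hx), ?_⟩
          rintro (hc | hc)
          · subst hc; exact hiU hx
          · exact hUS x hx hc
      rw [h1, h2]
    · rintro ⟨L, a⟩ hmem
      simp only [mem_filter, mem_univ, true_and] at hmem
      obtain ⟨⟨hiL, hwt, hsw⟩, hai⟩ := hmem
      rw [swL_of_ai1 i L a hai] at hsw
      have hSL : S ⊆ L := by rw [← hsw]; exact Finset.inter_subset_left
      have := Finset.card_sdiff_add_card_eq_card hSL
      simp only
      congr 2 <;> omega
  rw [stepA]
  by_cases hsh : s < h
  · rw [if_pos hsh]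
    set t := h - (s + 1) with htdef
    have hmaps : ∀ MU ∈ univ.filter (fun MU : Finset (Fin n) × Finset (Fin n) =>
        MU.1 ⊆ R ∧ MU.2 ⊆ R ∧ Disjoint MU.1 MU.2 ∧ s + 1 + MU.2.card = h),
        MU.1 ∈ R.powerset := by
      rintro MU hMU
      simp only [mem_filter, mem_univ, true_and] at hMU
      exact Finset.mem_powerset.mpr hMU.1
    rw [← Finset.sum_fiberwise_of_maps_to hmaps
      (fun MU => (s + MU.1.card).factorial * (n - 1 - (s + MU.1.card)).factorial)]
    have step1 : ∀ M ∈ R.powerset,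
        (∑ MU ∈ (univ.filter (fun MU : Finset (Fin n) × Finset (Fin n) =>
            MU.1 ⊆ R ∧ MU.2 ⊆ R ∧ Disjoint MU.1 MU.2 ∧ s + 1 + MU.2.card = h)).filter
            (fun MU => MU.1 = M),
          (s + MU.1.card).factorial * (n - 1 - (s + MU.1.card)).factorial)
        = (R.card - M.card).choose t * ((s + M.card).factorial * (n - 1 - (s + M.card)).factorial) := by
      intro M hM
      have hconst : ∀ MU ∈ (univ.filter (fun MU : Finset (Fin n) × Finset (Fin n) =>
            MU.1 ⊆ R ∧ MU.2 ⊆ R ∧ Disjoint MU.1 MU.2 ∧ s + 1 + MU.2.card = h)).filter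
            (fun MU => MU.1 = M),
          (s + MU.1.card).factorial * (n - 1 - (s + MU.1.card)).factorial
          = (s + M.card).factorial * (n - 1 - (s + M.card)).factorial := by
        intro MU hMU
        rw [(Finset.mem_filter.mp hMU).2]
      rw [Finset.sum_congr rfl hconst, Finset.sum_const, smul_eq_mul]
      congr 1
      have hcount : ((univ.filter (fun MU : Finset (Fin n) × Finset (Fin n) =>
            MU.1 ⊆ R ∧ MU.2 ⊆ R ∧ Disjoint MU.1 MU.2 ∧ s + 1 + MU.2.card = h)).filter
            (fun MU => MU.1 = M)).card = ((R \ M).powersetCard t).card := by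
        apply Finset.card_bij (fun MU _ => MU.2)
        · rintro MU hMU
          simp only [Finset.mem_filter, mem_univ, true_and] at hMU
          obtain ⟨⟨hMR, hUR, hdisj, hcard⟩, hfst⟩ := hMU
          rw [Finset.mem_powersetCard]
          constructor
          · intro x hx
            rw [Finset.mem_sdiff]
            refine ⟨hUR hx, fun hc => ?_⟩
            rw [← hfst] at hc
            exact Finset.disjoint_left.mp hdisj hc hx
          · omega
        · rintro MU hMU MU' hMU' heq
          have h1 := (Finset.mem_filter.mp hMU).2
          have h2 := (Finset.mem_filter.mp hMU').2
          exact Prod.ext (h1.trans h2.symm) heq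
        · intro U hU
          rw [Finset.mem_powersetCard] at hU
          refine ⟨(M, U), ?_, rfl⟩
          simp only [Finset.mem_filter, mem_univ, true_and]
          have hUsub : U ⊆ R \ M := hU.1
          refine ⟨⟨Finset.mem_powerset.mp hM, fun x hx => (Finset.mem_sdiff.mp (hUsub hx)).1,
            ?_, ?_⟩, trivial⟩
          · rw [Finset.disjoint_right]
            intro x hx
            exact (Finset.mem_sdiff.mp (hUsub hx)).2
          · omega
      rw [hcount, Finset.card_powersetCard, Finset.card_sdiff_of_subset (Finset.mem_powerset.mp hM)]
    rw [Finset.sum_congr rfl step1]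
    have hmaps2 : ∀ M ∈ R.powerset, M.card ∈ range (R.card + 1) := by
      intro M hM
      rw [Finset.mem_range, Nat.lt_succ_iff]
      exact Finset.card_le_card (Finset.mem_powerset.mp hM)
    rw [← Finset.sum_fiberwise_of_maps_to hmaps2
      (fun M => (R.card - M.card).choose t * ((s + M.card).factorial * (n - 1 - (s + M.card)).factorial))]
    have step2 : ∀ m ∈ range (R.card + 1),
        (∑ M ∈ R.powerset.filter (fun M => M.card = m),
          (R.card - M.card).choose t * ((s + M.card).factorial * (n - 1 - (s + M.card)).factorial))
        = s.factorial * R.card.factorial * ((s + m).choose m * (R.card - m).choose t) := by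
      intro m hm
      rw [Finset.mem_range, Nat.lt_succ_iff] at hm
      have hconst : ∀ M ∈ R.powerset.filter (fun M => M.card = m),
          (R.card - M.card).choose t * ((s + M.card).factorial * (n - 1 - (s + M.card)).factorial)
          = (R.card - m).choose t * ((s + m).factorial * (n - 1 - (s + m)).factorial) := by
        intro M hM
        rw [(Finset.mem_filter.mp hM).2]
      rw [Finset.sum_congr rfl hconst, Finset.sum_const, smul_eq_mul]
      rw [show R.powerset.filter (fun M => M.card = m) = R.powersetCard m from
        (Finset.powersetCard_eq_filter).symm, Finset.card_powersetCard]
      have hnm : n - 1 - (s + m) = R.card - m := by omega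
      rw [hnm]
      exact term1 R.card s t m hm
    rw [Finset.sum_congr rfl step2, ← Finset.mul_sum, V1 R.card s t]
    have h1 : R.card + s + 1 = n := by omega
    have h2 : s + t + 1 = h := by omega
    rw [h1, h2, hRcard]
  · rw [if_neg hsh]
    have hempty : univ.filter (fun MU : Finset (Fin n) × Finset (Fin n) =>
        MU.1 ⊆ R ∧ MU.2 ⊆ R ∧ Disjoint MU.1 MU.2 ∧ s + 1 + MU.2.card = h) = ∅ := by
      rw [Finset.filter_eq_empty_iff]
      rintro MU _ ⟨_, _, _, hcard⟩
      omega
    rw [hempty, Finset.sum_empty]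

lemma swL_of_ai0 {n : ℕ} (i : Fin n) (L : Finset (Fin n)) (a : Fin n → Fin 2)
    (hai : a i = 0) : swL i L a = (L ∩ (univ.filter fun l => a l = 1)) ∪ ((univ.erase i) \ L) := by
  ext x
  simp only [swL, mem_filter, mem_univ, true_and, Finset.mem_inter, Finset.mem_union,
    Finset.mem_sdiff, Finset.mem_erase]
  constructor
  · rintro (⟨h1, h2⟩ | ⟨h1, h2, _⟩)
    · exact Or.inl ⟨h1, h2⟩
    · exact Or.inr ⟨⟨h2, trivial⟩, h1⟩
  · rintro (⟨h1, h2⟩ | ⟨⟨h1, _⟩, h2⟩)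
    · exact Or.inl ⟨h1, h2⟩
    · exact Or.inr ⟨h2, h1, hai⟩

lemma term2 (r s a m : ℕ) (hm : m ≤ s) :
    s.choose m * ((s - m).choose a * ((r + m).factorial * (s - m).factorial))
      = r.factorial * s.factorial * ((r + m).choose m * (s - m).choose a) := by
  have h1 : s.choose m * m.factorial * (s - m).factorial = s.factorial :=
    Nat.choose_mul_factorial_mul_factorial hm
  have h2 : (r + m).choose m * m.factorial * r.factorial = (r + m).factorial := by
    have h3 := Nat.choose_mul_factorial_mul_factorial (Nat.le_add_left m r)
    rw [Nat.add_sub_cancel] at h3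
    exact h3
  apply Nat.eq_of_mul_eq_mul_right (Nat.factorial_pos m)
  calc s.choose m * ((s - m).choose a * ((r + m).factorial * (s - m).factorial)) * m.factorial
      = (s.choose m * m.factorial * (s - m).factorial) * ((r + m).factorial * (s - m).choose a) := by
        ring
    _ = s.factorial * ((r + m).factorial * (s - m).choose a) := by rw [h1]
    _ = s.factorial * (((r + m).choose m * m.factorial * r.factorial) * (s - m).choose a) := by
        rw [h2]
    _ = r.factorial * s.factorial * ((r + m).choose m * (s - m).choose a) * m.factorial := by
        ring

lemma part2 {n : ℕ} (i : Fin n) (h : ℕ) (S : Finset (Fin n)) (hiS : i ∉ S) :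
    ∑ La ∈ univ.filter (fun La : Finset (Fin n) × (Fin n → Fin 2) =>
        (i ∉ La.1 ∧ (univ.filter fun l => La.2 l = 1).card = h ∧ swL i La.1 La.2 = S) ∧
          ¬ (La.2 i = 1)),
      (La.1.card.factorial * (n - 1 - La.1.card).factorial)
    = if h ≤ S.card then S.card.factorial * (n - 1 - S.card).factorial * n.choose h else 0 := by
  classical
  have hn : 0 < n := i.pos
  set s := S.card with hs
  set R := (univ.erase i) \ S with hR
  have hRcard : R.card = n - 1 - s := card_R i S hiS
  have hSsub : S ⊆ univ.erase i := fun x hx =>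
    Finset.mem_erase.mpr ⟨fun hx2 => hiS (hx2 ▸ hx), mem_univ x⟩
  have hsn : s ≤ n - 1 := by
    have := Finset.card_le_card hSsub
    rw [Finset.card_erase_of_mem (mem_univ i), Finset.card_univ, Fintype.card_fin] at this
    exact this
  have hiR : i ∉ R := by simp [hR]
  have hRS : ∀ x, x ∈ R → x ∉ S := by
    intro x hx; simp only [hR, Finset.mem_sdiff] at hx; exact hx.2
  have hRmem : ∀ x, x ∈ R ↔ (x ≠ i ∧ x ∉ S) := by
    intro x
    simp [hR, Finset.mem_sdiff, Finset.mem_erase]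
  -- step A : bijection to pairs of finsets
  have stepA : ∑ La ∈ univ.filter (fun La : Finset (Fin n) × (Fin n → Fin 2) =>
        (i ∉ La.1 ∧ (univ.filter fun l => La.2 l = 1).card = h ∧ swL i La.1 La.2 = S) ∧
          ¬ (La.2 i = 1)),
      (La.1.card.factorial * (n - 1 - La.1.card).factorial)
      = ∑ MU ∈ univ.filter (fun MU : Finset (Fin n) × Finset (Fin n) =>
          MU.1 ⊆ S ∧ MU.2 ⊆ S ∧ Disjoint MU.1 MU.2 ∧ MU.1.card + MU.2.card = h),
        ((R.card + MU.1.card).factorial * (n - 1 - (R.card + MU.1.card)).factorial) := by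
    apply Finset.sum_nbij'
      (i := fun La => (La.1 ∩ S, (univ.filter fun l => La.2 l = 1) \ La.1))
      (j := fun MU => (R ∪ MU.1, charVec (MU.1 ∪ MU.2)))
    · rintro ⟨L, a⟩ hmem
      simp only [mem_filter, mem_univ, true_and] at hmem
      obtain ⟨⟨hiL, hwt, hsw⟩, hai1⟩ := hmem
      have hai : a i = 0 := by
        rcases fin2cases (a i) with h0 | h0
        · exact h0
        · exact absurd h0 hai1
      rw [swL_of_ai0 i L a hai] at hsw
      set T := univ.filter (fun l => a l = 1) with hT
      have hLTS : L ∩ T ⊆ S := by rw [← hsw]; exact Finset.subset_union_left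
      have hELS : (univ.erase i) \ L ⊆ S := by rw [← hsw]; exact Finset.subset_union_right
      have hTL : T ∩ L = L ∩ S := by
        ext x
        simp only [Finset.mem_inter]
        constructor
        · rintro ⟨h1, h2⟩
          exact ⟨h2, hLTS (Finset.mem_inter.mpr ⟨h2, h1⟩)⟩
        · rintro ⟨h1, h2⟩
          refine ⟨?_, h1⟩
          have : x ∈ L ∩ T ∪ (univ.erase i) \ L := hsw ▸ h2
          rcases Finset.mem_union.mp this with hx | hx
          · exact (Finset.mem_inter.mp hx).2
          · exact absurd h1 (Finset.mem_sdiff.mp hx).2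
      simp only [mem_filter, mem_univ, true_and]
      refine ⟨Finset.inter_subset_right, ?_, ?_, ?_⟩
      · intro x hx
        obtain ⟨hxT, hxL⟩ := Finset.mem_sdiff.mp hx
        have hxi : x ≠ i := by
          intro hc
          rw [hc] at hxT
          simp only [hT, mem_filter, mem_univ, true_and] at hxT
          rw [hxT] at hai
          exact absurd hai (by decide)
        exact hELS (Finset.mem_sdiff.mpr ⟨Finset.mem_erase.mpr ⟨hxi, mem_univ x⟩, hxL⟩)
      · rw [Finset.disjoint_left]
        intro x hx1 hx2
        exact (Finset.mem_sdiff.mp hx2).2 (Finset.mem_inter.mp hx1).1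
      · have := Finset.card_inter_add_card_sdiff T L
        rw [hTL] at this
        rw [hwt] at this
        omega
    · rintro ⟨M, U⟩ hmem
      simp only [mem_filter, mem_univ, true_and] at hmem
      obtain ⟨hMS, hUS, hdisj, hcard⟩ := hmem
      have hiM : i ∉ M := fun hx => hiS (hMS hx)
      have hiU : i ∉ U := fun hx => hiS (hUS hx)
      have hiMU : i ∉ M ∪ U := by
        simp only [Finset.mem_union]
        rintro (hx | hx)
        · exact hiM hx
        · exact hiU hx
      have hai : charVec (M ∪ U) i = 0 := by
        simp only [charVec, if_neg hiMU]
      simp only [mem_filter, mem_univ, true_and]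
      refine ⟨⟨?_, ?_, ?_⟩, ?_⟩
      · simp only [Finset.mem_union]
        rintro (hx | hx)
        · exact hiR hx
        · exact hiM hx
      · rw [filter_charVec, Finset.card_union_of_disjoint hdisj]
        exact hcard
      · rw [swL_of_ai0 _ _ _ hai, filter_charVec]
        have h1 : (R ∪ M) ∩ (M ∪ U) = M := by
          ext x
          simp only [Finset.mem_inter, Finset.mem_union]
          constructor
          · rintro ⟨h1 | h1, h2 | h2⟩
            · exact h2
            · exact absurd (hUS h2) (hRS x h1)
            · exact h1
            · exact h1
          · intro hx
            exact ⟨Or.inr hx, Or.inl hx⟩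
        have h2 : (univ.erase i) \ (R ∪ M) = S \ M := by
          ext x
          simp only [Finset.mem_sdiff, Finset.mem_erase, Finset.mem_union, mem_univ, and_true]
          constructor
          · rintro ⟨hxi, hx⟩
            push_neg at hx
            have hxS : x ∈ S := by
              by_contra hxS
              exact hx.1 ((hRmem x).mpr ⟨hxi, hxS⟩)
            exact ⟨hxS, hx.2⟩
          · rintro ⟨hxS, hxM⟩
            refine ⟨fun hc => hiS (hc ▸ hxS), ?_⟩
            push_neg
            exact ⟨fun hc => (hRS x hc) hxS, hxM⟩
        rw [h1, h2]
        exact Finset.union_sdiff_of_subset hMS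
      · intro hc
        rw [charVec_mem_iff] at hc
        exact hiMU hc
    · rintro ⟨L, a⟩ hmem
      simp only [mem_filter, mem_univ, true_and] at hmem
      obtain ⟨⟨hiL, hwt, hsw⟩, hai1⟩ := hmem
      have hai : a i = 0 := by
        rcases fin2cases (a i) with h0 | h0
        · exact h0
        · exact absurd h0 hai1
      rw [swL_of_ai0 i L a hai] at hsw
      set T := univ.filter (fun l => a l = 1) with hT
      have hLTS : L ∩ T ⊆ S := by rw [← hsw]; exact Finset.subset_union_left
      have hELS : (univ.erase i) \ L ⊆ S := by rw [← hsw]; exact Finset.subset_union_right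
      have hTL : T ∩ L = L ∩ S := by
        ext x
        simp only [Finset.mem_inter]
        constructor
        · rintro ⟨h1, h2⟩
          exact ⟨h2, hLTS (Finset.mem_inter.mpr ⟨h2, h1⟩)⟩
        · rintro ⟨h1, h2⟩
          refine ⟨?_, h1⟩
          have : x ∈ L ∩ T ∪ (univ.erase i) \ L := hsw ▸ h2
          rcases Finset.mem_union.mp this with hx | hx
          · exact (Finset.mem_inter.mp hx).2
          · exact absurd h1 (Finset.mem_sdiff.mp hx).2
      rw [Prod.ext_iff]
      constructor
      · show R ∪ (L ∩ S) = L
        ext x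
        simp only [Finset.mem_union, Finset.mem_inter]
        constructor
        · rintro (hx | ⟨hx, _⟩)
          · by_contra hxL
            have hx2 := (hRmem x).mp hx
            exact hx2.2 (hELS (Finset.mem_sdiff.mpr
              ⟨Finset.mem_erase.mpr ⟨hx2.1, mem_univ x⟩, hxL⟩))
          · exact hx
        · intro hx
          by_cases hxS : x ∈ S
          · exact Or.inr ⟨hx, hxS⟩
          · exact Or.inl ((hRmem x).mpr ⟨fun hc => hiL (hc ▸ hx), hxS⟩)
      · show charVec ((L ∩ S) ∪ (T \ L)) = a
        have hunion : (L ∩ S) ∪ (T \ L) = T := by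
          ext x
          simp only [Finset.mem_union, Finset.mem_inter, Finset.mem_sdiff]
          constructor
          · rintro (⟨h1, h2⟩ | ⟨h1, _⟩)
            · exact (Finset.mem_inter.mp (hTL ▸ Finset.mem_inter.mpr ⟨h1, h2⟩ :
                x ∈ T ∩ L)).1
            · exact h1
          · intro hx
            by_cases hxL : x ∈ L
            · have : x ∈ T ∩ L := Finset.mem_inter.mpr ⟨hx, hxL⟩
              rw [hTL] at this
              exact Or.inl (Finset.mem_inter.mp this)
            · exact Or.inr ⟨hx, hxL⟩
        rw [hunion, hT, charVec_filter]
    · rintro ⟨M, U⟩ hmem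
      simp only [mem_filter, mem_univ, true_and] at hmem
      obtain ⟨hMS, hUS, hdisj, hcard⟩ := hmem
      have hiM : i ∉ M := fun hx => hiS (hMS hx)
      rw [Prod.ext_iff]
      constructor
      · show (R ∪ M) ∩ S = M
        ext x
        simp only [Finset.mem_inter, Finset.mem_union]
        constructor
        · rintro ⟨h1 | h1, h2⟩
          · exact absurd h2 (hRS x h1)
          · exact h1
        · intro hx
          exact ⟨Or.inr hx, hMS hx⟩
      · show (univ.filter fun l => charVec (M ∪ U) l = 1) \ (R ∪ M) = U
        rw [filter_charVec]
        ext x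
        simp only [Finset.mem_sdiff, Finset.mem_union]
        constructor
        · rintro ⟨h1 | h1, h2⟩
          · push_neg at h2
            exact absurd h1 h2.2
          · exact h1
        · intro hx
          refine ⟨Or.inr hx, ?_⟩
          push_neg
          exact ⟨fun hc => (hRS x hc) (hUS hx), fun hc => Finset.disjoint_left.mp hdisj hc hx⟩
    · rintro ⟨L, a⟩ hmem
      simp only [mem_filter, mem_univ, true_and] at hmem
      obtain ⟨⟨hiL, hwt, hsw⟩, hai1⟩ := hmem
      have hai : a i = 0 := by
        rcases fin2cases (a i) with h0 | h0
        · exact h0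
        · exact absurd h0 hai1
      rw [swL_of_ai0 i L a hai] at hsw
      have hELS : (univ.erase i) \ L ⊆ S := by rw [← hsw]; exact Finset.subset_union_right
      have hLRM : L = R ∪ (L ∩ S) := by
        ext x
        simp only [Finset.mem_union, Finset.mem_inter]
        constructor
        · intro hx
          by_cases hxS : x ∈ S
          · exact Or.inr ⟨hx, hxS⟩
          · exact Or.inl ((hRmem x).mpr ⟨fun hc => hiL (hc ▸ hx), hxS⟩)
        · rintro (hx | ⟨hx, _⟩)
          · by_contra hxL
            have hx2 := (hRmem x).mp hx
            exact hx2.2 (hELS (Finset.mem_sdiff.mpr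
              ⟨Finset.mem_erase.mpr ⟨hx2.1, mem_univ x⟩, hxL⟩))
          · exact hx
      have hdisjRM : Disjoint R (L ∩ S) := by
        rw [Finset.disjoint_left]
        intro x hx1 hx2
        exact (hRS x hx1) (Finset.mem_inter.mp hx2).2
      have hLcard : L.card = R.card + (L ∩ S).card := by
        conv_lhs => rw [hLRM]
        exact Finset.card_union_of_disjoint hdisjRM
      simp only
      rw [hLcard]
  rw [stepA]
  -- counting stage
  have hmaps : ∀ MU ∈ univ.filter (fun MU : Finset (Fin n) × Finset (Fin n) =>
      MU.1 ⊆ S ∧ MU.2 ⊆ S ∧ Disjoint MU.1 MU.2 ∧ MU.1.card + MU.2.card = h),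
      MU.1 ∈ S.powerset := by
    rintro MU hMU
    simp only [mem_filter, mem_univ, true_and] at hMU
    exact Finset.mem_powerset.mpr hMU.1
  rw [← Finset.sum_fiberwise_of_maps_to hmaps
    (fun MU => (R.card + MU.1.card).factorial * (n - 1 - (R.card + MU.1.card)).factorial)]
  have step1 : ∀ M ∈ S.powerset,
      (∑ MU ∈ (univ.filter (fun MU : Finset (Fin n) × Finset (Fin n) =>
          MU.1 ⊆ S ∧ MU.2 ⊆ S ∧ Disjoint MU.1 MU.2 ∧ MU.1.card + MU.2.card = h)).filter
          (fun MU => MU.1 = M),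
        (R.card + MU.1.card).factorial * (n - 1 - (R.card + MU.1.card)).factorial)
      = (if M.card ≤ h then (S.card - M.card).choose (h - M.card) else 0) *
          ((R.card + M.card).factorial * (n - 1 - (R.card + M.card)).factorial) := by
    intro M hM
    have hconst : ∀ MU ∈ (univ.filter (fun MU : Finset (Fin n) × Finset (Fin n) =>
          MU.1 ⊆ S ∧ MU.2 ⊆ S ∧ Disjoint MU.1 MU.2 ∧ MU.1.card + MU.2.card = h)).filter
          (fun MU => MU.1 = M),
        (R.card + MU.1.card).factorial * (n - 1 - (R.card + MU.1.card)).factorial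
        = (R.card + M.card).factorial * (n - 1 - (R.card + M.card)).factorial := by
      intro MU hMU
      rw [(Finset.mem_filter.mp hMU).2]
    rw [Finset.sum_congr rfl hconst, Finset.sum_const, smul_eq_mul]
    congr 1
    have hcount : ((univ.filter (fun MU : Finset (Fin n) × Finset (Fin n) =>
          MU.1 ⊆ S ∧ MU.2 ⊆ S ∧ Disjoint MU.1 MU.2 ∧ MU.1.card + MU.2.card = h)).filter
          (fun MU => MU.1 = M)).card
        = ((S \ M).powerset.filter (fun U => M.card + U.card = h)).card := by
      apply Finset.card_bij (fun MU _ => MU.2)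
      · rintro MU hMU
        simp only [Finset.mem_filter, mem_univ, true_and] at hMU
        obtain ⟨⟨hMS2, hUS2, hdisj, hcard⟩, hfst⟩ := hMU
        rw [Finset.mem_filter, Finset.mem_powerset]
        constructor
        · intro x hx
          rw [Finset.mem_sdiff]
          refine ⟨hUS2 hx, fun hc => ?_⟩
          rw [← hfst] at hc
          exact Finset.disjoint_left.mp hdisj hc hx
        · rw [← hfst]; exact hcard
      · rintro MU hMU MU' hMU' heq
        have h1 := (Finset.mem_filter.mp hMU).2
        have h2 := (Finset.mem_filter.mp hMU').2
        exact Prod.ext (h1.trans h2.symm) heq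
      · intro U hU
        rw [Finset.mem_filter, Finset.mem_powerset] at hU
        refine ⟨(M, U), ?_, rfl⟩
        simp only [Finset.mem_filter, mem_univ, true_and]
        obtain ⟨hUsub, hUcard⟩ := hU
        refine ⟨⟨Finset.mem_powerset.mp hM, fun x hx => (Finset.mem_sdiff.mp (hUsub hx)).1,
          ?_, hUcard⟩, trivial⟩
        rw [Finset.disjoint_right]
        intro x hx
        exact (Finset.mem_sdiff.mp (hUsub hx)).2
    rw [hcount]
    by_cases hMh : M.card ≤ h
    · rw [if_pos hMh]
      have hcong : (S \ M).powerset.filter (fun U => M.card + U.card = h)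
          = (S \ M).powerset.filter (fun U => U.card = h - M.card) := by
        apply Finset.filter_congr
        intro U _
        constructor
        · intro hc; omega
        · intro hc; omega
      rw [hcong, ← Finset.powersetCard_eq_filter, Finset.card_powersetCard,
        Finset.card_sdiff_of_subset (Finset.mem_powerset.mp hM)]
    · rw [if_neg hMh]
      have : (S \ M).powerset.filter (fun U => M.card + U.card = h) = ∅ := by
        rw [Finset.filter_eq_empty_iff]
        intro U _
        omega
      rw [this, Finset.card_empty]
  rw [Finset.sum_congr rfl step1]
  have hmaps2 : ∀ M ∈ S.powerset, M.card ∈ range (S.card + 1) := by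
    intro M hM
    rw [Finset.mem_range, Nat.lt_succ_iff]
    exact Finset.card_le_card (Finset.mem_powerset.mp hM)
  rw [← Finset.sum_fiberwise_of_maps_to hmaps2
    (fun M => (if M.card ≤ h then (S.card - M.card).choose (h - M.card) else 0) *
      ((R.card + M.card).factorial * (n - 1 - (R.card + M.card)).factorial))]
  have step2 : ∀ m ∈ range (S.card + 1),
      (∑ M ∈ S.powerset.filter (fun M => M.card = m),
        (if M.card ≤ h then (S.card - M.card).choose (h - M.card) else 0) *
          ((R.card + M.card).factorial * (n - 1 - (R.card + M.card)).factorial))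
      = s.choose m * ((if m ≤ h then (s - m).choose (h - m) else 0) *
          ((R.card + m).factorial * (n - 1 - (R.card + m)).factorial)) := by
    intro m hm
    have hconst : ∀ M ∈ S.powerset.filter (fun M => M.card = m),
        (if M.card ≤ h then (S.card - M.card).choose (h - M.card) else 0) *
          ((R.card + M.card).factorial * (n - 1 - (R.card + M.card)).factorial)
        = (if m ≤ h then (s - m).choose (h - m) else 0) *
          ((R.card + m).factorial * (n - 1 - (R.card + m)).factorial) := by
      intro M hM
      rw [(Finset.mem_filter.mp hM).2]
    rw [Finset.sum_congr rfl hconst, Finset.sum_const, smul_eq_mul]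
    rw [show S.powerset.filter (fun M => M.card = m) = S.powersetCard m from
      (Finset.powersetCard_eq_filter).symm, Finset.card_powersetCard]
  rw [Finset.sum_congr rfl step2]
  by_cases hhs : h ≤ s
  · rw [if_pos hhs]
    have hsubr : range (h + 1) ⊆ range (s + 1) := by
      apply Finset.range_subset_range.mpr; omega
    rw [← Finset.sum_subset hsubr]
    · have hterm : ∀ m ∈ range (h + 1),
          s.choose m * ((if m ≤ h then (s - m).choose (h - m) else 0) *
            ((R.card + m).factorial * (n - 1 - (R.card + m)).factorial))
          = R.card.factorial * s.factorial * ((R.card + m).choose m * (s - m).choose (h - m)) := by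
        intro m hm
        rw [Finset.mem_range, Nat.lt_succ_iff] at hm
        rw [if_pos hm]
        have he : n - 1 - (R.card + m) = s - m := by omega
        rw [he]
        exact term2 R.card s (h - m) m (le_trans hm hhs)
      rw [Finset.sum_congr rfl hterm, ← Finset.mul_sum, V2 R.card s h hhs]
      have h1 : R.card + s + 1 = n := by omega
      rw [h1, hRcard]
      ring
    · intro m hm hm2
      rw [Finset.mem_range] at hm hm2
      have : ¬ (m ≤ h) := by omega
      rw [if_neg this, zero_mul, mul_zero]
  · rw [if_neg hhs]
    apply Finset.sum_eq_zero
    intro m hm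
    rw [Finset.mem_range, Nat.lt_succ_iff] at hm
    rw [if_pos (by omega : m ≤ h)]
    rw [Nat.choose_eq_zero_of_lt (by omega : s - m < h - m)]
    simp


lemma core_count {n : ℕ} (v : (Fin n → Fin 2) → Fin 2) (i : Fin n) (h : ℕ) (S : Finset (Fin n))
    (hiS : i ∉ S) :
    ∑ La ∈ univ.filter (fun La : Finset (Fin n) × (Fin n → Fin 2) =>
        i ∉ La.1 ∧ (univ.filter fun l => La.2 l = 1).card = h ∧ swL i La.1 La.2 = S),
      (La.1.card.factorial * (n - 1 - La.1.card).factorial)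
    = n.choose h * (S.card.factorial * (n - 1 - S.card).factorial) := by
  classical
  rw [← Finset.sum_filter_add_sum_filter_not _ (fun La : Finset (Fin n) × (Fin n → Fin 2) =>
    La.2 i = 1), Finset.filter_filter, Finset.filter_filter]
  rw [part1 v i h S hiS, part2 i h S hiS]
  by_cases hc : S.card < h
  · rw [if_pos hc, if_neg (by omega), add_zero]
    ring
  · rw [if_neg hc, if_pos (by omega), zero_add]
    ring

/-- Lemma 4.5: `C(n,h) · ∑_{S an i-swing} |S|!·(n−1−|S|)!` equals the number of pairs
`(π, a)` with exactly `h` votes equal to `2` for which player `i` is pivotal. -/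
theorem swing_count {n : ℕ} (v : (Fin n → Fin 2) → Fin 2)
    (hmono : Monotone v) (hsurj : Function.Surjective v) (i : Fin n) (h : ℕ) (hh : h ≤ n) :
    n.choose h *
      ∑ S ∈ (Finset.univ : Finset (Finset (Fin n))).filter
          (fun S => i ∉ S ∧ v (charVec (insert i S)) = 1 ∧ v (charVec S) = 0),
        S.card.factorial * (n - 1 - S.card).factorial =
    ((Finset.univ : Finset (Equiv.Perm (Fin n) × (Fin n → Fin 2))).filter
        (fun pa => (Finset.univ.filter (fun l => pa.2 l = 1)).card = h ∧
          Pivotal v pa.1 pa.2 i)).card := by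
  classical
  set Pairs := (Finset.univ : Finset (Equiv.Perm (Fin n) × (Fin n → Fin 2))).filter
      (fun pa => (Finset.univ.filter (fun l => pa.2 l = 1)).card = h ∧
        Pivotal v pa.1 pa.2 i) with hPairs
  set T := (univ.filter (fun La : Finset (Fin n) × (Fin n → Fin 2) =>
      i ∉ La.1 ∧ (univ.filter fun l => La.2 l = 1).card = h ∧
      v (charVec (insert i (swL i La.1 La.2))) = 1 ∧ v (charVec (swL i La.1 La.2)) = 0)) with hT
  have hmapsT : ∀ pa ∈ Pairs, ((lowset pa.1 i, pa.2) :
      Finset (Fin n) × (Fin n → Fin 2)) ∈ T := by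
    rintro ⟨π, a⟩ hpa
    simp only [hPairs, mem_filter, mem_univ, true_and] at hpa
    obtain ⟨hwt, hpiv⟩ := hpa
    rw [pivotal_iff] at hpiv
    simp only [hT, mem_filter, mem_univ, true_and]
    exact ⟨i_notMem_lowset π i, hwt, hpiv.1, hpiv.2⟩
  have hstep1 : Pairs.card = ∑ La ∈ T, (Pairs.filter
      (fun pa => ((lowset pa.1 i, pa.2) : Finset (Fin n) × (Fin n → Fin 2)) = La)).card :=
    Finset.card_eq_sum_card_fiberwise hmapsT
  have hstep2 : ∀ La ∈ T, (Pairs.filter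
      (fun pa => ((lowset pa.1 i, pa.2) : Finset (Fin n) × (Fin n → Fin 2)) = La)).card
      = La.1.card.factorial * (n - 1 - La.1.card).factorial := by
    rintro ⟨L, a⟩ hLa
    simp only [hT, mem_filter, mem_univ, true_and] at hLa
    obtain ⟨hiL, hwt, hv1, hv0⟩ := hLa
    have hbij : (Pairs.filter (fun pa => ((lowset pa.1 i, pa.2) :
        Finset (Fin n) × (Fin n → Fin 2)) = (L, a))).card
        = (univ.filter (fun π : Equiv.Perm (Fin n) => lowset π i = L)).card := by
      apply Finset.card_bij (fun pa _ => pa.1)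
      · rintro ⟨π, b⟩ hpa
        simp only [mem_filter, Prod.mk.injEq] at hpa
        simp only [mem_filter, mem_univ, true_and]
        exact hpa.2.1
      · rintro ⟨π, b⟩ hpa ⟨π', b'⟩ hpa' heq
        simp only [mem_filter, Prod.mk.injEq] at hpa hpa'
        simp only at heq
        rw [Prod.ext_iff]
        exact ⟨heq, hpa.2.2.trans hpa'.2.2.symm⟩
      · intro π hπ
        simp only [mem_filter, mem_univ, true_and] at hπ
        refine ⟨(π, a), ?_, rfl⟩
        simp only [mem_filter, Prod.mk.injEq, hPairs, mem_univ, true_and]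
        refine ⟨⟨hwt, ?_⟩, hπ, trivial⟩
        rw [pivotal_iff, hπ]
        exact ⟨hv1, hv0⟩
    rw [hbij, card_lowset_eq i L hiL]
  rw [hstep1, Finset.sum_congr rfl hstep2]
  have hmapsS : ∀ La ∈ T, swL i La.1 La.2 ∈
      (Finset.univ : Finset (Finset (Fin n))).filter
        (fun S => i ∉ S ∧ v (charVec (insert i S)) = 1 ∧ v (charVec S) = 0) := by
    rintro ⟨L, a⟩ hLa
    simp only [hT, mem_filter, mem_univ, true_and] at hLa
    obtain ⟨hiL, hwt, hv1, hv0⟩ := hLa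
    simp only [mem_filter, mem_univ, true_and]
    exact ⟨i_notMem_swL i L hiL a, hv1, hv0⟩
  rw [← Finset.sum_fiberwise_of_maps_to hmapsS
    (fun La => La.1.card.factorial * (n - 1 - La.1.card).factorial)]
  have hstep4 : ∀ S ∈ (Finset.univ : Finset (Finset (Fin n))).filter
      (fun S => i ∉ S ∧ v (charVec (insert i S)) = 1 ∧ v (charVec S) = 0),
      (∑ La ∈ T.filter (fun La => swL i La.1 La.2 = S),
        (La.1.card.factorial * (n - 1 - La.1.card).factorial))
      = n.choose h * (S.card.factorial * (n - 1 - S.card).factorial) := by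
    intro S hS
    simp only [mem_filter, mem_univ, true_and] at hS
    obtain ⟨hiS, hv1, hv0⟩ := hS
    have hTeq : T.filter (fun La => swL i La.1 La.2 = S)
        = univ.filter (fun La : Finset (Fin n) × (Fin n → Fin 2) =>
            i ∉ La.1 ∧ (univ.filter fun l => La.2 l = 1).card = h ∧ swL i La.1 La.2 = S) := by
      ext La
      simp only [hT, Finset.filter_filter, mem_filter, mem_univ, true_and]
      constructor
      · rintro ⟨⟨h1, h2, _, _⟩, h5⟩
        exact ⟨h1, h2, h5⟩
      · rintro ⟨h1, h2, h3⟩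
        rw [h3]
        exact ⟨⟨h1, h2, hv1, hv0⟩, rfl⟩
    rw [hTeq]
    exact core_count v i h S hiS
  rw [Finset.sum_congr rfl hstep4]
  try rw [Finset.mul_sum]
end

section
/- Let ṽ be a simple game on n players and v the corresponding monotone (2,2) game. Then the Shapley-Shubik index of player i equals (1/n!) times the number of permutations π such that player i is pivotal in the roll-call where all players vote 2 ('yes'), i.e., φ̃_i(ṽ) = (1/n!)·∑_π [(v̄_{π,p-1}(a) − v̲_{π,p-1}(a)) − (v̄_{π,p}(a) − v̲_{π,p}(a))] with a = (2,…,2) and p = π^{-1}(i); and the same holds with a = (1,…,1). -/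
open Finset

lemma fiber_facts {n : ℕ} (i : Fin n) (S : Finset (Fin n)) (π : Equiv.Perm (Fin n))
    (hπ : univ.filter (fun l => (π l : ℕ) < (π i : ℕ)) = S) :
    (π i : ℕ) = S.card ∧ (∀ l, ((π l : ℕ) < S.card ↔ l ∈ S)) ∧
      (∀ l, (S.card < (π l : ℕ) ↔ l ∉ insert i S)) := by
  have hmem : ∀ l, ((π l : ℕ) < (π i : ℕ)) ↔ l ∈ S := by
    intro l
    rw [← hπ]; simp
  have himg : Finset.image π (univ.filter fun l => (π l : ℕ) < (π i : ℕ)) = Iio (π i) := by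
    ext m
    simp only [Finset.mem_image, mem_filter, mem_univ, true_and, Finset.mem_Iio]
    constructor
    · rintro ⟨l, h, rfl⟩; exact h
    · intro h; exact ⟨π.symm m, by simpa using h, by simp⟩
  have hcard : (π i : ℕ) = S.card := by
    have := congrArg Finset.card himg
    rw [Finset.card_image_of_injective _ π.injective, hπ, Fin.card_Iio] at this
    omega
  have hlt : ∀ l, ((π l : ℕ) < S.card ↔ l ∈ S) := by
    intro l; rw [← hcard]; exact hmem l
  refine ⟨hcard, hlt, ?_⟩
  intro l
  have heqi : (π l : ℕ) = S.card ↔ l = i := by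
    constructor
    · intro h
      have : π l = π i := Fin.ext (by omega)
      exact π.injective this
    · rintro rfl; exact hcard
  simp only [Finset.mem_insert]
  constructor
  · intro h hmem'
    rcases hmem' with rfl | hS
    · omega
    · have := (hlt l).2 hS; omega
  · intro h
    have h1 : ¬ (π l : ℕ) < S.card := fun hc => h (Or.inr ((hlt l).1 hc))
    have h2 : ¬ (π l : ℕ) = S.card := fun hc => h (Or.inl (heqi.mp hc))
    omega

lemma card_pivot_fiber {n : ℕ} (i : Fin n) (S : Finset (Fin n)) (hiS : i ∉ S) :
    (univ.filter (fun π : Equiv.Perm (Fin n) =>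
        univ.filter (fun l => (π l : ℕ) < (π i : ℕ)) = S)).card
      = S.card.factorial * (n - 1 - S.card).factorial := by
  classical
  have hk : S.card < n := by
    have h1 : (insert i S).card = S.card + 1 := Finset.card_insert_of_notMem hiS
    have h2 : (insert i S).card ≤ Fintype.card (Fin n) := Finset.card_le_univ _ |>.trans (by simp)
    simp only [Fintype.card_fin] at h2
    omega
  set kf : Fin n := ⟨S.card, hk⟩ with hkf
  -- card of the subtypes
  have c1 : Fintype.card {m : Fin n // (m : ℕ) < S.card} = S.card := by
    rw [Fintype.card_subtype]
    have : univ.filter (fun m : Fin n => (m : ℕ) < S.card) = Iio kf := by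
      ext m; simp [Fin.lt_def, hkf]
    rw [this, Fin.card_Iio]
  have c2 : Fintype.card {m : Fin n // S.card < (m : ℕ)} = n - 1 - S.card := by
    rw [Fintype.card_subtype]
    have : univ.filter (fun m : Fin n => S.card < (m : ℕ)) = Ioi kf := by
      ext m; simp [Fin.lt_def, hkf]
    rw [this, Fin.card_Ioi]
  have cS : Fintype.card {x : Fin n // x ∈ S} = S.card := Fintype.card_coe S
  have cT : Fintype.card {x : Fin n // x ∉ insert i S} = n - 1 - S.card := by
    rw [Fintype.card_subtype_compl]
    have : Fintype.card {x : Fin n // x ∈ insert i S} = S.card + 1 := by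
      rw [Fintype.card_coe, Finset.card_insert_of_notMem hiS]
    rw [this, Fintype.card_fin]
    omega
  rw [← Fintype.card_subtype]
  set A := {π : Equiv.Perm (Fin n) //
      univ.filter (fun l => (π l : ℕ) < (π i : ℕ)) = S} with hA
  let E1 := {x : Fin n // x ∈ S} ↪ {m : Fin n // (m : ℕ) < S.card}
  let E2 := {x : Fin n // x ∉ insert i S} ↪ {m : Fin n // S.card < (m : ℕ)}
  have cE1 : Fintype.card E1 = S.card.factorial := by
    rw [Fintype.card_embedding_eq, c1, cS, Nat.descFactorial_self]
  have cE2 : Fintype.card E2 = (n - 1 - S.card).factorial := by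
    rw [Fintype.card_embedding_eq, c2, cT, Nat.descFactorial_self]
  -- the bijection
  let Φ : A → E1 × E2 := fun p =>
    (⟨fun x => ⟨p.1 x, ((fiber_facts i S p.1 p.2).2.1 x).2 x.2⟩,
      fun x y hxy => Subtype.ext (p.1.injective (congrArg Subtype.val hxy))⟩,
     ⟨fun x => ⟨p.1 x, ((fiber_facts i S p.1 p.2).2.2 x).2 x.2⟩,
      fun x y hxy => Subtype.ext (p.1.injective (congrArg Subtype.val hxy))⟩)
  have hΦ : Function.Bijective Φ := by
    constructor
    · rintro ⟨π, hπ⟩ ⟨π', hπ'⟩ h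
      have h1 : ∀ x : {x : Fin n // x ∈ S},
          ((Φ ⟨π, hπ⟩).1 x : Fin n) = ((Φ ⟨π', hπ'⟩).1 x : Fin n) := by
        rw [h]; intro x; rfl
      have h2 : ∀ x : {x : Fin n // x ∉ insert i S},
          ((Φ ⟨π, hπ⟩).2 x : Fin n) = ((Φ ⟨π', hπ'⟩).2 x : Fin n) := by
        rw [h]; intro x; rfl
      have hval : ∀ l, π l = π' l := by
        intro l
        by_cases hl : l ∈ S
        · exact h1 ⟨l, hl⟩
        · by_cases hl' : l ∉ insert i S
          · exact h2 ⟨l, hl'⟩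
          · have hli : l = i := by
              rcases Finset.mem_insert.mp (not_not.mp hl') with rfl | hmem
              · rfl
              · exact absurd hmem hl
            subst hli
            have e1 := (fiber_facts l S π hπ).1
            have e2 := (fiber_facts l S π' hπ').1
            exact Fin.ext (by omega)
      exact Subtype.ext (Equiv.ext hval)
    · rintro ⟨e1, e2⟩
      let g : Fin n → Fin n := fun l =>
        if h : l ∈ S then ((e1 ⟨l, h⟩ : {m : Fin n // (m : ℕ) < S.card}) : Fin n)
        else if h' : l ∉ insert i S then
          ((e2 ⟨l, h'⟩ : {m : Fin n // S.card < (m : ℕ)}) : Fin n)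
        else kf
      have hgS : ∀ (l : Fin n) (h : l ∈ S),
          g l = ((e1 ⟨l, h⟩ : {m : Fin n // (m : ℕ) < S.card}) : Fin n) := by
        intro l h; simp only [g]; rw [dif_pos h]
      have hgT : ∀ (l : Fin n) (h : l ∉ insert i S),
          g l = ((e2 ⟨l, h⟩ : {m : Fin n // S.card < (m : ℕ)}) : Fin n) := by
        intro l h
        have h0 : l ∉ S := fun hc => h (Finset.mem_insert_of_mem hc)
        simp only [g]; rw [dif_neg h0, dif_pos h]
      have hkfval : (kf : ℕ) = S.card := rfl
      have zone : ∀ l : Fin n, (l ∈ S ∧ (g l : ℕ) < S.card) ∨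
          (l = i ∧ (g l : ℕ) = S.card) ∨ (l ∉ insert i S ∧ S.card < (g l : ℕ)) := by
        intro l
        by_cases h : l ∈ S
        · exact Or.inl ⟨h, by rw [hgS l h]; exact (e1 ⟨l, h⟩).2⟩
        · by_cases h' : l ∉ insert i S
          · exact Or.inr (Or.inr ⟨h', by rw [hgT l h']; exact (e2 ⟨l, h'⟩).2⟩)
          · have hli : l = i := by
              rcases Finset.mem_insert.mp (not_not.mp h') with rfl | hmem
              · rfl
              · exact absurd hmem h
            refine Or.inr (Or.inl ⟨hli, ?_⟩)
            have : g l = kf := by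
              simp only [g]; rw [dif_neg h, dif_neg h']
            rw [this, hkfval]
      have hginj : Function.Injective g := by
        intro a b hab
        have habv : (g a : ℕ) = (g b : ℕ) := congrArg Fin.val hab
        rcases zone a with ⟨ha, hva⟩ | ⟨ha, hva⟩ | ⟨ha, hva⟩ <;>
          rcases zone b with ⟨hb, hvb⟩ | ⟨hb, hvb⟩ | ⟨hb, hvb⟩
        · rw [hgS a ha, hgS b hb] at hab
          exact congrArg Subtype.val (e1.injective (Subtype.ext hab))
        · exact absurd habv (by omega)
        · exact absurd habv (by omega)
        · exact absurd habv (by omega)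
        · rw [ha, hb]
        · exact absurd habv (by omega)
        · exact absurd habv (by omega)
        · exact absurd habv (by omega)
        · rw [hgT a ha, hgT b hb] at hab
          exact congrArg Subtype.val (e2.injective (Subtype.ext hab))
      have hgbij := Finite.injective_iff_bijective.mp hginj
      let π : Equiv.Perm (Fin n) := Equiv.ofBijective g hgbij
      have hπval : ∀ l, π l = g l := fun _ => rfl
      have hπi : π i = kf := by
        rw [hπval]
        simp only [g]
        rw [dif_neg hiS, dif_neg (not_not_intro (Finset.mem_insert_self i S))]
      have hπA : univ.filter (fun l => (π l : ℕ) < (π i : ℕ)) = S := by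
        ext l
        simp only [mem_filter, mem_univ, true_and, hπi, hkfval]
        have hlg : (π l : ℕ) = (g l : ℕ) := rfl
        rw [hlg]
        rcases zone l with ⟨hl, hv⟩ | ⟨hl, hv⟩ | ⟨hl, hv⟩
        · simp [hl, hv]
        · subst hl; simp [hiS]; omega
        · have hlS : l ∉ S := fun hc => hl (Finset.mem_insert_of_mem hc)
          simp [hlS]; omega
      refine ⟨⟨π, hπA⟩, ?_⟩
      apply Prod.ext
      · ext x
        exact congrArg Fin.val (hgS x.1 x.2)
      · ext x
        exact congrArg Fin.val (hgT x.1 x.2)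
  have := Fintype.card_of_bijective hΦ
  rw [this, Fintype.card_prod, cE1, cE2]

lemma perm_sum_eq {n : ℕ} (i : Fin n) (f : Finset (Fin n) → ℝ) :
    ∑ π : Equiv.Perm (Fin n), f (univ.filter fun l => (π l : ℕ) < (π i : ℕ))
      = ∑ S ∈ univ.filter (fun S : Finset (Fin n) => i ∉ S),
          (S.card.factorial : ℝ) * ((n - 1 - S.card).factorial : ℝ) * f S := by
  classical
  rw [← Finset.sum_fiberwise_of_maps_to (g := fun π : Equiv.Perm (Fin n) =>
      univ.filter fun l => (π l : ℕ) < (π i : ℕ)) (t := univ.filter fun S => i ∉ S)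
      (fun π _ => by simp) (fun π => f (univ.filter fun l => (π l : ℕ) < (π i : ℕ)))]
  refine Finset.sum_congr rfl ?_
  intro S hS
  have hiS : i ∉ S := (Finset.mem_filter.mp hS).2
  have h1 : ∀ π ∈ univ.filter (fun π : Equiv.Perm (Fin n) =>
      univ.filter (fun l => (π l : ℕ) < (π i : ℕ)) = S),
      f (univ.filter fun l => (π l : ℕ) < (π i : ℕ)) = f S :=
    fun π hπ => by rw [(Finset.mem_filter.mp hπ).2]
  rw [Finset.sum_congr rfl h1, Finset.sum_const, card_pivot_fiber i S hiS, nsmul_eq_mul]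
  push_cast; ring

lemma sum_reverse {n : ℕ} (i : Fin n) (f : Finset (Fin n) → ℝ) :
    ∑ π : Equiv.Perm (Fin n), f (univ.filter fun l => (π i : ℕ) < (π l : ℕ))
      = ∑ π : Equiv.Perm (Fin n), f (univ.filter fun l => (π l : ℕ) < (π i : ℕ)) := by
  refine Fintype.sum_equiv (Equiv.mulLeft (Fin.revPerm : Equiv.Perm (Fin n))) _ _ ?_
  intro π
  congr 1
  ext l
  simp only [mem_filter, mem_univ, true_and, Equiv.coe_mulLeft, Equiv.Perm.mul_apply,
    Fin.revPerm_apply]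
  rw [← Fin.lt_def, ← Fin.lt_def, Fin.rev_lt_rev, Fin.lt_def]

lemma summand_one {n : ℕ} (v : (Fin n → Fin 2) → Fin 2) (π : Equiv.Perm (Fin n)) (i : Fin n) :
    ((((vbar v π (fun _ => 1) (π i) : ℕ) : ℝ) - ((vbot v π (fun _ => 1) (π i) : ℕ) : ℝ)) -
        (((vbar v π (fun _ => 1) ((π i : ℕ) + 1) : ℕ) : ℝ) -
          ((vbot v π (fun _ => 1) ((π i : ℕ) + 1) : ℕ) : ℝ)))
      = ((v (charVec (insert i (univ.filter fun l => (π l : ℕ) < (π i : ℕ)))) : ℕ) : ℝ)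
          - ((v (charVec (univ.filter fun l => (π l : ℕ) < (π i : ℕ))) : ℕ) : ℝ) := by
  have e0 : ∀ h : ℕ, vbar v π (fun _ => 1) h = v (fun _ => 1) := by
    intro h; unfold vbar; congr 1; funext l; simp
  have e1 : ∀ h : ℕ, vbot v π (fun _ => 1) h
      = v (charVec (univ.filter fun l => (π l : ℕ) < h)) := by
    intro h; unfold vbot charVec; congr 1; funext l
    simp [Finset.mem_filter]
  have e2 : univ.filter (fun l => (π l : ℕ) < (π i : ℕ) + 1)
      = insert i (univ.filter fun l => (π l : ℕ) < (π i : ℕ)) := by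
    ext l
    simp only [mem_filter, mem_univ, true_and, Finset.mem_insert]
    constructor
    · intro h
      rcases Nat.lt_succ_iff_lt_or_eq.mp h with h' | h'
      · exact Or.inr h'
      · exact Or.inl (π.injective (Fin.ext h'))
    · rintro (rfl | h) <;> omega
  rw [e0, e0, e1, e1, e2]
  ring

lemma summand_zero {n : ℕ} (v : (Fin n → Fin 2) → Fin 2) (π : Equiv.Perm (Fin n)) (i : Fin n) :
    ((((vbar v π (fun _ => 0) (π i) : ℕ) : ℝ) - ((vbot v π (fun _ => 0) (π i) : ℕ) : ℝ)) -
        (((vbar v π (fun _ => 0) ((π i : ℕ) + 1) : ℕ) : ℝ) -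
          ((vbot v π (fun _ => 0) ((π i : ℕ) + 1) : ℕ) : ℝ)))
      = ((v (charVec (insert i (univ.filter fun l => (π i : ℕ) < (π l : ℕ)))) : ℕ) : ℝ)
          - ((v (charVec (univ.filter fun l => (π i : ℕ) < (π l : ℕ))) : ℕ) : ℝ) := by
  have e0 : ∀ h : ℕ, vbot v π (fun _ => 0) h = v (fun _ => 0) := by
    intro h; unfold vbot; congr 1; funext l; simp
  have e1 : ∀ h : ℕ, vbar v π (fun _ => 0) h
      = v (charVec (univ.filter fun l => h ≤ (π l : ℕ))) := by
    intro h; unfold vbar charVec; congr 1; funext l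
    by_cases hc : (π l : ℕ) < h
    · rw [if_pos hc, if_neg (by simp; omega)]
    · rw [if_neg hc, if_pos (by simp; omega)]
  have e2 : univ.filter (fun l => (π i : ℕ) ≤ (π l : ℕ))
      = insert i (univ.filter fun l => (π i : ℕ) < (π l : ℕ)) := by
    ext l
    simp only [mem_filter, mem_univ, true_and, Finset.mem_insert]
    constructor
    · intro h
      rcases Nat.lt_or_ge (π i : ℕ) (π l : ℕ) with h' | h'
      · exact Or.inr h'
      · exact Or.inl (π.injective (Fin.ext (by omega)))
    · rintro (rfl | h)
      · exact le_refl _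
      · exact Nat.le_of_lt h
  have e3 : univ.filter (fun l => (π i : ℕ) + 1 ≤ (π l : ℕ))
      = univ.filter (fun l => (π i : ℕ) < (π l : ℕ)) := by
    ext l; simp only [mem_filter, mem_univ, true_and]; omega
  rw [e0, e0, e1, e1, e3]
  rw [show (univ.filter fun l => (π i : ℕ) ≤ (π l : ℕ)) =
    insert i (univ.filter fun l => (π i : ℕ) < (π l : ℕ)) from e2]
  ring

/-- Lemma 4.3: the Shapley-Shubik index of player `i` equals `1/n!` times the number of
orderings in which `i` is pivotal in the roll-call where all players vote `2` ("yes"),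
and likewise where all players vote `1` ("no"). -/
theorem shapley_shubik_extreme_roll_calls {n : ℕ} (v : (Fin n → Fin 2) → Fin 2)
    (hmono : Monotone v) (hsurj : Function.Surjective v) (i : Fin n) :
    ((1 / (n.factorial : ℝ)) *
        ∑ S ∈ (Finset.univ : Finset (Finset (Fin n))).filter (fun S => i ∉ S),
          (S.card.factorial : ℝ) * ((n - 1 - S.card).factorial : ℝ) *
            (((v (charVec (insert i S)) : ℕ) : ℝ) - ((v (charVec S) : ℕ) : ℝ)) =
      (1 / (n.factorial : ℝ)) *
        ∑ π : Equiv.Perm (Fin n),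
          ((((vbar v π (fun _ => 1) (π i) : ℕ) : ℝ) - ((vbot v π (fun _ => 1) (π i) : ℕ) : ℝ)) -
            (((vbar v π (fun _ => 1) ((π i : ℕ) + 1) : ℕ) : ℝ) -
              ((vbot v π (fun _ => 1) ((π i : ℕ) + 1) : ℕ) : ℝ)))) ∧
    ((1 / (n.factorial : ℝ)) *
        ∑ S ∈ (Finset.univ : Finset (Finset (Fin n))).filter (fun S => i ∉ S),
          (S.card.factorial : ℝ) * ((n - 1 - S.card).factorial : ℝ) *
            (((v (charVec (insert i S)) : ℕ) : ℝ) - ((v (charVec S) : ℕ) : ℝ)) =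
      (1 / (n.factorial : ℝ)) *
        ∑ π : Equiv.Perm (Fin n),
          ((((vbar v π (fun _ => 0) (π i) : ℕ) : ℝ) - ((vbot v π (fun _ => 0) (π i) : ℕ) : ℝ)) -
            (((vbar v π (fun _ => 0) ((π i : ℕ) + 1) : ℕ) : ℝ) -
              ((vbot v π (fun _ => 0) ((π i : ℕ) + 1) : ℕ) : ℝ)))) := by
  classical
  set f : Finset (Fin n) → ℝ := fun S =>
    ((v (charVec (insert i S)) : ℕ) : ℝ) - ((v (charVec S) : ℕ) : ℝ) with hf
  have hL : (∑ S ∈ (Finset.univ : Finset (Finset (Fin n))).filter (fun S => i ∉ S),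
        (S.card.factorial : ℝ) * ((n - 1 - S.card).factorial : ℝ) *
          (((v (charVec (insert i S)) : ℕ) : ℝ) - ((v (charVec S) : ℕ) : ℝ)))
      = ∑ π : Equiv.Perm (Fin n), f (univ.filter fun l => (π l : ℕ) < (π i : ℕ)) :=
    (perm_sum_eq i f).symm
  constructor
  · congr 1
    rw [hL]
    exact Finset.sum_congr rfl fun π _ => (summand_one v π i).symm
  · congr 1
    rw [hL, ← sum_reverse i f]
    exact Finset.sum_congr rfl fun π _ => (summand_zero v π i).symm
end

section
/- If u and w are monotone maps from J^n to K (with J, K finite linearly ordered sets) that are both output-rough, then u ∨ w (pointwise max) and u ∧ w (pointwise min) are output-rough; moreover if u and w are surjective and nontrivial, so are u ∨ w and u ∧ w. -/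
open Finset

/-- The set of still-possible outcomes after the first `h` players (according to `π`,
player `l` being called at position `π l`, 0-indexed) have declared votes from `a`. -/
def reach {n : ℕ} {J : Type*} [Fintype J] [DecidableEq J]
    (v : (Fin n → J) → ℤ) (π : Equiv.Perm (Fin n)) (a : Fin n → J) (h : ℕ) : Finset ℤ :=
  (Finset.univ.filter (fun a' : Fin n → J => ∀ l, (π l : ℕ) < h → a' l = a l)).image v

/-- A game with integer output values is output-rough if every reachable-outcome set is
an integer interval. -/
def OutputRough {n : ℕ} {J : Type*} [Fintype J] [DecidableEq J]
    (v : (Fin n → J) → ℤ) : Prop :=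
  ∀ (a : Fin n → J) (π : Equiv.Perm (Fin n)) (h : ℕ),
    ∃ α β : ℤ, reach v π a h = Finset.Icc α β

lemma mem_reach {n : ℕ} {J : Type*} [Fintype J] [DecidableEq J]
    (v : (Fin n → J) → ℤ) (π : Equiv.Perm (Fin n)) (a : Fin n → J) (h : ℕ) (x : ℤ) :
    x ∈ reach v π a h ↔ ∃ a', (∀ l, (π l : ℕ) < h → a' l = a l) ∧ v a' = x := by
  simp [reach]

lemma key_sup {n : ℕ} {J : Type*} [Fintype J] [LinearOrder J]
    (u w : (Fin n → J) → ℤ) (hum : Monotone u) (hwm : Monotone w)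
    (hwr : OutputRough w) (π : Equiv.Perm (Fin n)) (a : Fin n → J) (h : ℕ)
    {α₁ β₁ α₂ β₂ : ℤ}
    (h1 : reach u π a h = Finset.Icc α₁ β₁) (h2 : reach w π a h = Finset.Icc α₂ β₂)
    {γ : ℤ} (hγ1 : α₁ ≤ γ) (hγ2 : α₂ ≤ γ) (hγr : γ ≤ β₁) :
    ∃ a', (∀ l, (π l : ℕ) < h → a' l = a l) ∧ max (u a') (w a') = γ := by
  classical
  have hγu : γ ∈ reach u π a h := by rw [h1]; exact Finset.mem_Icc.2 ⟨hγ1, hγr⟩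
  obtain ⟨a', ha'S, ha'⟩ := (mem_reach u π a h γ).1 hγu
  have hαβ2 : α₂ ≤ β₂ := by
    have hne : w a ∈ reach w π a h := (mem_reach _ _ _ _ _).2 ⟨a, fun l _ => rfl, rfl⟩
    rw [h2, Finset.mem_Icc] at hne
    exact hne.1.trans hne.2
  have hα2 : (α₂ : ℤ) ∈ reach w π a h := by
    rw [h2]; exact Finset.mem_Icc.2 ⟨le_refl _, hαβ2⟩
  obtain ⟨s, hsS, hs⟩ := (mem_reach _ _ _ _ _).1 hα2
  by_cases hwa : w a' ≤ γ
  · exact ⟨a', ha'S, by rw [ha']; exact max_eq_left hwa⟩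
  push_neg at hwa
  set b : Fin n → J := fun l => min (a' l) (s l) with hb
  have hbS : ∀ l, (π l : ℕ) < h → b l = a l := fun l hl => by
    simp [hb, ha'S l hl, hsS l hl]
  have hbw : w b ≤ γ :=
    le_trans (le_trans (hwm (fun l => min_le_right _ _)) (le_of_eq hs)) hγ2
  set c : ℕ → (Fin n → J) := fun i l => if (l : ℕ) < i then a' l else b l with hc
  have hcle : ∀ i, c i ≤ a' := by
    intro i l
    by_cases hli : (l : ℕ) < i <;> simp [hc, hli] <;> exact min_le_left _ _
  have hcS : ∀ i l, (π l : ℕ) < h → c i l = a l := by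
    intro i l hl
    by_cases hli : (l : ℕ) < i <;> simp [hc, hli, ha'S l hl, hbS l hl]
  have hc0 : c 0 = b := by funext l; simp [hc]
  have hcn : c n = a' := by funext l; simp [hc, l.isLt]
  have hP : ∃ i, γ < w (c i) := ⟨n, by rw [hcn]; exact hwa⟩
  set i := Nat.find hP with hidef
  have hiw : γ < w (c i) := Nat.find_spec hP
  have hin : i ≤ n := Nat.find_le (by rw [hcn]; exact hwa)
  have hi0 : i ≠ 0 := by
    intro h0
    rw [h0, hc0] at hiw
    exact absurd hiw (not_lt.2 hbw)
  have hprev : w (c (i - 1)) ≤ γ := not_lt.1 (Nat.find_min hP (by omega))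
  have hn1 : 1 ≤ n := by omega
  set l : Fin n := ⟨i - 1, by omega⟩ with hl
  have hcil : c i l = a' l := by
    have hlt : ((l : Fin n) : ℕ) < i := by simp [hl]; omega
    simp [hc, hlt]
  have hcil' : c (i - 1) l = b l := by
    have hlt : ¬ ((l : Fin n) : ℕ) < i - 1 := by simp [hl]
    simp [hc, hlt]
  have hdiff : ∀ m : Fin n, m ≠ l → c i m = c (i - 1) m := by
    intro m hm
    have hmv : (m : ℕ) ≠ i - 1 := fun hh => hm (Fin.ext hh)
    rcases lt_or_ge (m : ℕ) (i - 1) with hlt | hge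
    · have h1' : (m : ℕ) < i := by omega
      simp [hc, hlt, h1']
    · have h1' : ¬ (m : ℕ) < i := by omega
      have h2' : ¬ (m : ℕ) < i - 1 := by omega
      simp [hc, h1', h2']
  have hπl : ¬ ((π l : ℕ) < h) := by
    intro hlh
    have e1 : c i l = a l := hcS i l hlh
    have e2 : c (i - 1) l = a l := hcS (i - 1) l hlh
    have heq : c i = c (i - 1) := by
      funext m
      by_cases hm : m = l
      · rw [hm, e1, e2]
      · exact hdiff m hm
    rw [heq] at hiw
    exact absurd hiw (not_lt.2 hprev)
  set σ : Equiv.Perm (Fin n) := Equiv.swap l ⟨n - 1, by omega⟩ with hσ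
  have hσ1 : ∀ m : Fin n, ((σ m : ℕ) < n - 1) → m ≠ l := by
    intro m hm hml
    subst hml
    rw [hσ, Equiv.swap_apply_left] at hm
    simp at hm
  have hσ2 : ∀ m : Fin n, m ≠ l → ((σ m : ℕ) < n - 1) := by
    intro m hm
    by_cases hmn : m = ⟨n - 1, by omega⟩
    · subst hmn
      rw [hσ, Equiv.swap_apply_right]
      have : (l : ℕ) ≠ n - 1 := by
        intro hh
        exact hm (Fin.ext hh.symm)
      have := l.isLt
      omega
    · rw [hσ, Equiv.swap_apply_of_ne_of_ne hm hmn]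
      have h1' : (m : ℕ) ≠ n - 1 := fun hh => hmn (Fin.ext hh)
      have := m.isLt
      omega
  obtain ⟨α', β', hI⟩ := hwr (c (i - 1)) σ (n - 1)
  have m1 : w (c (i - 1)) ∈ reach w σ (c (i - 1)) (n - 1) :=
    (mem_reach _ _ _ _ _).2 ⟨c (i - 1), fun _ _ => rfl, rfl⟩
  have m2 : w (c i) ∈ reach w σ (c (i - 1)) (n - 1) :=
    (mem_reach _ _ _ _ _).2 ⟨c i, fun m hm => hdiff m (hσ1 m hm), rfl⟩
  rw [hI, Finset.mem_Icc] at m1 m2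
  have hγmem : γ ∈ reach w σ (c (i - 1)) (n - 1) := by
    rw [hI]
    exact Finset.mem_Icc.2 ⟨m1.1.trans hprev, (le_of_lt hiw).trans m2.2⟩
  obtain ⟨d, hdc, hdγ⟩ := (mem_reach _ _ _ _ _).1 hγmem
  have hdm : ∀ m : Fin n, m ≠ l → d m = c (i - 1) m := fun m hm => hdc m (hσ2 m hm)
  have hdl : d l ≤ a' l := by
    by_contra hcon
    push_neg at hcon
    have hcid : c i ≤ d := by
      intro m
      by_cases hm : m = l
      · subst hm; rw [hcil]; exact le_of_lt hcon
      · rw [hdm m hm, hdiff m hm]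
    have := hwm hcid
    rw [hdγ] at this
    exact absurd hiw (not_lt.2 this)
  have hda : d ≤ a' := by
    intro m
    by_cases hm : m = l
    · subst hm; exact hdl
    · rw [hdm m hm]; exact hcle (i - 1) m
  have hud : u d ≤ γ := by
    have := hum hda
    rw [ha'] at this
    exact this
  refine ⟨d, ?_, ?_⟩
  · intro m hm
    by_cases hml : m = l
    · exact absurd (hml ▸ hm) hπl
    · rw [hdm m hml]; exact hcS (i - 1) m hm
  · rw [hdγ]; exact max_eq_right hud

lemma key_inf {n : ℕ} {J : Type*} [Fintype J] [LinearOrder J]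
    (u w : (Fin n → J) → ℤ) (hum : Monotone u) (hwm : Monotone w)
    (hwr : OutputRough w) (π : Equiv.Perm (Fin n)) (a : Fin n → J) (h : ℕ)
    {α₁ β₁ α₂ β₂ : ℤ}
    (h1 : reach u π a h = Finset.Icc α₁ β₁) (h2 : reach w π a h = Finset.Icc α₂ β₂)
    {γ : ℤ} (hγ1 : γ ≤ β₁) (hγ2 : γ ≤ β₂) (hγr : α₁ ≤ γ) :
    ∃ a', (∀ l, (π l : ℕ) < h → a' l = a l) ∧ min (u a') (w a') = γ := by
  classical
  have hγu : γ ∈ reach u π a h := by rw [h1]; exact Finset.mem_Icc.2 ⟨hγr, hγ1⟩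
  obtain ⟨a', ha'S, ha'⟩ := (mem_reach u π a h γ).1 hγu
  have hαβ2 : α₂ ≤ β₂ := by
    have hne : w a ∈ reach w π a h := (mem_reach _ _ _ _ _).2 ⟨a, fun l _ => rfl, rfl⟩
    rw [h2, Finset.mem_Icc] at hne
    exact hne.1.trans hne.2
  have hβ2 : (β₂ : ℤ) ∈ reach w π a h := by
    rw [h2]; exact Finset.mem_Icc.2 ⟨hαβ2, le_refl _⟩
  obtain ⟨s, hsS, hs⟩ := (mem_reach _ _ _ _ _).1 hβ2
  by_cases hwa : γ ≤ w a'
  · exact ⟨a', ha'S, by rw [ha']; exact min_eq_left hwa⟩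
  push_neg at hwa
  set b : Fin n → J := fun l => max (a' l) (s l) with hb
  have hbS : ∀ l, (π l : ℕ) < h → b l = a l := fun l hl => by
    simp [hb, ha'S l hl, hsS l hl]
  have hbw : γ ≤ w b :=
    le_trans hγ2 (le_trans (le_of_eq hs.symm) (hwm (fun l => le_max_right _ _)))
  set c : ℕ → (Fin n → J) := fun i l => if (l : ℕ) < i then a' l else b l with hc
  have hcle : ∀ i, a' ≤ c i := by
    intro i l
    by_cases hli : (l : ℕ) < i <;> simp [hc, hli] <;> exact le_max_left _ _
  have hcS : ∀ i l, (π l : ℕ) < h → c i l = a l := by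
    intro i l hl
    by_cases hli : (l : ℕ) < i <;> simp [hc, hli, ha'S l hl, hbS l hl]
  have hc0 : c 0 = b := by funext l; simp [hc]
  have hcn : c n = a' := by funext l; simp [hc, l.isLt]
  have hP : ∃ i, w (c i) < γ := ⟨n, by rw [hcn]; exact hwa⟩
  set i := Nat.find hP with hidef
  have hiw : w (c i) < γ := Nat.find_spec hP
  have hin : i ≤ n := Nat.find_le (by rw [hcn]; exact hwa)
  have hi0 : i ≠ 0 := by
    intro h0
    rw [h0, hc0] at hiw
    exact absurd hiw (not_lt.2 hbw)
  have hprev : γ ≤ w (c (i - 1)) := not_lt.1 (Nat.find_min hP (by omega))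
  have hn1 : 1 ≤ n := by omega
  set l : Fin n := ⟨i - 1, by omega⟩ with hl
  have hcil : c i l = a' l := by
    have hlt : ((l : Fin n) : ℕ) < i := by simp [hl]; omega
    simp [hc, hlt]
  have hdiff : ∀ m : Fin n, m ≠ l → c i m = c (i - 1) m := by
    intro m hm
    have hmv : (m : ℕ) ≠ i - 1 := fun hh => hm (Fin.ext hh)
    rcases lt_or_ge (m : ℕ) (i - 1) with hlt | hge
    · have h1' : (m : ℕ) < i := by omega
      simp [hc, hlt, h1']
    · have h1' : ¬ (m : ℕ) < i := by omega
      have h2' : ¬ (m : ℕ) < i - 1 := by omega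
      simp [hc, h1', h2']
  have hπl : ¬ ((π l : ℕ) < h) := by
    intro hlh
    have e1 : c i l = a l := hcS i l hlh
    have e2 : c (i - 1) l = a l := hcS (i - 1) l hlh
    have heq : c i = c (i - 1) := by
      funext m
      by_cases hm : m = l
      · rw [hm, e1, e2]
      · exact hdiff m hm
    rw [heq] at hiw
    exact absurd hiw (not_lt.2 hprev)
  set σ : Equiv.Perm (Fin n) := Equiv.swap l ⟨n - 1, by omega⟩ with hσ
  have hσ1 : ∀ m : Fin n, ((σ m : ℕ) < n - 1) → m ≠ l := by
    intro m hm hml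
    subst hml
    rw [hσ, Equiv.swap_apply_left] at hm
    simp at hm
  have hσ2 : ∀ m : Fin n, m ≠ l → ((σ m : ℕ) < n - 1) := by
    intro m hm
    by_cases hmn : m = ⟨n - 1, by omega⟩
    · subst hmn
      rw [hσ, Equiv.swap_apply_right]
      have : (l : ℕ) ≠ n - 1 := by
        intro hh
        exact hm (Fin.ext hh.symm)
      have := l.isLt
      omega
    · rw [hσ, Equiv.swap_apply_of_ne_of_ne hm hmn]
      have h1' : (m : ℕ) ≠ n - 1 := fun hh => hmn (Fin.ext hh)
      have := m.isLt
      omega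
  obtain ⟨α', β', hI⟩ := hwr (c (i - 1)) σ (n - 1)
  have m1 : w (c (i - 1)) ∈ reach w σ (c (i - 1)) (n - 1) :=
    (mem_reach _ _ _ _ _).2 ⟨c (i - 1), fun _ _ => rfl, rfl⟩
  have m2 : w (c i) ∈ reach w σ (c (i - 1)) (n - 1) :=
    (mem_reach _ _ _ _ _).2 ⟨c i, fun m hm => hdiff m (hσ1 m hm), rfl⟩
  rw [hI, Finset.mem_Icc] at m1 m2
  have hγmem : γ ∈ reach w σ (c (i - 1)) (n - 1) := by
    rw [hI]
    exact Finset.mem_Icc.2 ⟨m2.1.trans (le_of_lt hiw), hprev.trans m1.2⟩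
  obtain ⟨d, hdc, hdγ⟩ := (mem_reach _ _ _ _ _).1 hγmem
  have hdm : ∀ m : Fin n, m ≠ l → d m = c (i - 1) m := fun m hm => hdc m (hσ2 m hm)
  have hdl : a' l ≤ d l := by
    by_contra hcon
    push_neg at hcon
    have hcid : d ≤ c i := by
      intro m
      by_cases hm : m = l
      · subst hm; rw [hcil]; exact le_of_lt hcon
      · rw [hdm m hm, hdiff m hm]
    have := hwm hcid
    rw [hdγ] at this
    exact absurd hiw (not_lt.2 this)
  have hda : a' ≤ d := by
    intro m
    by_cases hm : m = l
    · subst hm; exact hdl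
    · rw [hdm m hm]; exact hcle (i - 1) m
  have hud : γ ≤ u d := by
    have := hum hda
    rw [ha'] at this
    exact this
  refine ⟨d, ?_, ?_⟩
  · intro m hm
    by_cases hml : m = l
    · exact absurd (hml ▸ hm) hπl
    · rw [hdm m hml]; exact hcS (i - 1) m hm
  · rw [hdγ]; exact min_eq_right hud

lemma reach_sup {n : ℕ} {J : Type*} [Fintype J] [LinearOrder J]
    (u w : (Fin n → J) → ℤ) (hum : Monotone u) (hwm : Monotone w)
    (hur : OutputRough u) (hwr : OutputRough w) (π : Equiv.Perm (Fin n)) (a : Fin n → J) (h : ℕ)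
    {α₁ β₁ α₂ β₂ : ℤ}
    (h1 : reach u π a h = Finset.Icc α₁ β₁) (h2 : reach w π a h = Finset.Icc α₂ β₂) :
    reach (fun x => max (u x) (w x)) π a h = Finset.Icc (max α₁ α₂) (max β₁ β₂) := by
  ext x
  rw [mem_reach, Finset.mem_Icc]
  constructor
  · rintro ⟨a', ha'S, rfl⟩
    have hu : u a' ∈ Finset.Icc α₁ β₁ := by
      rw [← h1]; exact (mem_reach _ _ _ _ _).2 ⟨a', ha'S, rfl⟩
    have hw : w a' ∈ Finset.Icc α₂ β₂ := by
      rw [← h2]; exact (mem_reach _ _ _ _ _).2 ⟨a', ha'S, rfl⟩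
    rw [Finset.mem_Icc] at hu hw
    constructor
    · exact max_le (hu.1.trans (le_max_left _ _)) (hw.1.trans (le_max_right _ _))
    · exact max_le (hu.2.trans (le_max_left _ _)) (hw.2.trans (le_max_right _ _))
  · rintro ⟨hl, hr⟩
    have hl1 : α₁ ≤ x := (le_max_left _ _).trans hl
    have hl2 : α₂ ≤ x := (le_max_right _ _).trans hl
    rcases le_total β₂ β₁ with hβ | hβ
    · have hx1 : x ≤ β₁ := by rw [max_eq_left hβ] at hr; exact hr
      exact key_sup u w hum hwm hwr π a h h1 h2 hl1 hl2 hx1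
    · have hx2 : x ≤ β₂ := by rw [max_eq_right hβ] at hr; exact hr
      obtain ⟨a', hS, hx⟩ := key_sup w u hwm hum hur π a h h2 h1 hl2 hl1 hx2
      exact ⟨a', hS, by rw [max_comm]; exact hx⟩

lemma reach_inf {n : ℕ} {J : Type*} [Fintype J] [LinearOrder J]
    (u w : (Fin n → J) → ℤ) (hum : Monotone u) (hwm : Monotone w)
    (hur : OutputRough u) (hwr : OutputRough w) (π : Equiv.Perm (Fin n)) (a : Fin n → J) (h : ℕ)
    {α₁ β₁ α₂ β₂ : ℤ}
    (h1 : reach u π a h = Finset.Icc α₁ β₁) (h2 : reach w π a h = Finset.Icc α₂ β₂) :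
    reach (fun x => min (u x) (w x)) π a h = Finset.Icc (min α₁ α₂) (min β₁ β₂) := by
  ext x
  rw [mem_reach, Finset.mem_Icc]
  constructor
  · rintro ⟨a', ha'S, rfl⟩
    have hu : u a' ∈ Finset.Icc α₁ β₁ := by
      rw [← h1]; exact (mem_reach _ _ _ _ _).2 ⟨a', ha'S, rfl⟩
    have hw : w a' ∈ Finset.Icc α₂ β₂ := by
      rw [← h2]; exact (mem_reach _ _ _ _ _).2 ⟨a', ha'S, rfl⟩
    rw [Finset.mem_Icc] at hu hw
    constructor
    · exact le_min ((min_le_left _ _).trans hu.1) ((min_le_right _ _).trans hw.1)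
    · exact le_min ((min_le_left _ _).trans hu.2) ((min_le_right _ _).trans hw.2)
  · rintro ⟨hl, hr⟩
    have hr1 : x ≤ β₁ := hr.trans (min_le_left _ _)
    have hr2 : x ≤ β₂ := hr.trans (min_le_right _ _)
    rcases le_total α₁ α₂ with hα | hα
    · have hx1 : α₁ ≤ x := by rw [min_eq_left hα] at hl; exact hl
      exact key_inf u w hum hwm hwr π a h h1 h2 hr1 hr2 hx1
    · have hx2 : α₂ ≤ x := by rw [min_eq_right hα] at hl; exact hl
      obtain ⟨a', hS, hx⟩ := key_inf w u hwm hum hur π a h h2 h1 hr2 hr1 hx2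
      exact ⟨a', hS, by rw [min_comm]; exact hx⟩

lemma reach_zero {n : ℕ} {J : Type*} [Fintype J] [DecidableEq J]
    (v : (Fin n → J) → ℤ) (π : Equiv.Perm (Fin n)) (a : Fin n → J) :
    reach v π a 0 = Finset.univ.image v := by
  unfold reach
  congr 1
  apply Finset.filter_true_of_mem
  intro x _ l hl
  omega

/-- Lemma 5.1: for nontrivial, surjective (onto `K`), monotone, output-rough games `u`
and `w`, the pointwise max `u ∨ w` and pointwise min `u ∧ w` are again nontrivial,
surjective, monotone and output-rough. -/
theorem sup_inf_output_rough {n : ℕ} {J : Type*} [Fintype J] [LinearOrder J]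
    (K : Finset ℤ) (hK : 2 ≤ K.card)
    (u w : (Fin n → J) → ℤ)
    (hum : Monotone u) (hwm : Monotone w)
    (husurj : Finset.univ.image u = K) (hwsurj : Finset.univ.image w = K)
    (hur : OutputRough u) (hwr : OutputRough w) :
    Monotone (fun a => max (u a) (w a)) ∧ Monotone (fun a => min (u a) (w a)) ∧
    OutputRough (fun a => max (u a) (w a)) ∧ OutputRough (fun a => min (u a) (w a)) ∧
    Finset.univ.image (fun a => max (u a) (w a)) = K ∧
    Finset.univ.image (fun a => min (u a) (w a)) = K := by
  classical
  have hKne : K.Nonempty := Finset.card_pos.1 (by omega)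
  obtain ⟨k, hk⟩ := hKne
  have hku : k ∈ Finset.univ.image u := by rw [husurj]; exact hk
  obtain ⟨a0, _, _⟩ := Finset.mem_image.1 hku
  refine ⟨hum.max hwm, hum.min hwm, ?_, ?_, ?_, ?_⟩
  · intro a π h
    obtain ⟨α₁, β₁, h1⟩ := hur a π h
    obtain ⟨α₂, β₂, h2⟩ := hwr a π h
    exact ⟨max α₁ α₂, max β₁ β₂, reach_sup u w hum hwm hur hwr π a h h1 h2⟩
  · intro a π h
    obtain ⟨α₁, β₁, h1⟩ := hur a π h
    obtain ⟨α₂, β₂, h2⟩ := hwr a π h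
    exact ⟨min α₁ α₂, min β₁ β₂, reach_inf u w hum hwm hur hwr π a h h1 h2⟩
  · obtain ⟨α₁, β₁, h1⟩ := hur a0 1 0
    obtain ⟨α₂, β₂, h2⟩ := hwr a0 1 0
    have e1 : K = Finset.Icc α₁ β₁ := by rw [← husurj, ← reach_zero u 1 a0, h1]
    have e2 : K = Finset.Icc α₂ β₂ := by rw [← hwsurj, ← reach_zero w 1 a0, h2]
    have hαβ1 : α₁ ≤ β₁ := by
      have : k ∈ Finset.Icc α₁ β₁ := by rw [← e1]; exact hk
      rw [Finset.mem_Icc] at this; omega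
    have hαeq : α₁ = α₂ ∧ β₁ = β₂ := by
      have m1 : α₁ ∈ Finset.Icc α₂ β₂ := by
        rw [← e2, e1]; exact Finset.mem_Icc.2 ⟨le_refl _, hαβ1⟩
      have m2 : α₂ ∈ Finset.Icc α₁ β₁ := by
        rw [← e1, e2]
        have hαβ2 : α₂ ≤ β₂ := by
          have : k ∈ Finset.Icc α₂ β₂ := by rw [← e2]; exact hk
          rw [Finset.mem_Icc] at this; omega
        exact Finset.mem_Icc.2 ⟨le_refl _, hαβ2⟩
      have m3 : β₁ ∈ Finset.Icc α₂ β₂ := by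
        rw [← e2, e1]; exact Finset.mem_Icc.2 ⟨hαβ1, le_refl _⟩
      have m4 : β₂ ∈ Finset.Icc α₁ β₁ := by
        rw [← e1, e2]
        have hαβ2 : α₂ ≤ β₂ := by
          have : k ∈ Finset.Icc α₂ β₂ := by rw [← e2]; exact hk
          rw [Finset.mem_Icc] at this; omega
        exact Finset.mem_Icc.2 ⟨hαβ2, le_refl _⟩
      rw [Finset.mem_Icc] at m1 m2 m3 m4
      omega
    rw [← reach_zero (fun a => max (u a) (w a)) 1 a0,
      reach_sup u w hum hwm hur hwr 1 a0 0 h1 h2, ← hαeq.1, ← hαeq.2,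
      max_self, max_self, ← e1]
  · obtain ⟨α₁, β₁, h1⟩ := hur a0 1 0
    obtain ⟨α₂, β₂, h2⟩ := hwr a0 1 0
    have e1 : K = Finset.Icc α₁ β₁ := by rw [← husurj, ← reach_zero u 1 a0, h1]
    have e2 : K = Finset.Icc α₂ β₂ := by rw [← hwsurj, ← reach_zero w 1 a0, h2]
    have hαβ1 : α₁ ≤ β₁ := by
      have : k ∈ Finset.Icc α₁ β₁ := by rw [← e1]; exact hk
      rw [Finset.mem_Icc] at this; omega
    have hαβ2 : α₂ ≤ β₂ := by
      have : k ∈ Finset.Icc α₂ β₂ := by rw [← e2]; exact hk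
      rw [Finset.mem_Icc] at this; omega
    have hαeq : α₁ = α₂ ∧ β₁ = β₂ := by
      have m1 : α₁ ∈ Finset.Icc α₂ β₂ := by
        rw [← e2, e1]; exact Finset.mem_Icc.2 ⟨le_refl _, hαβ1⟩
      have m2 : α₂ ∈ Finset.Icc α₁ β₁ := by
        rw [← e1, e2]; exact Finset.mem_Icc.2 ⟨le_refl _, hαβ2⟩
      have m3 : β₁ ∈ Finset.Icc α₂ β₂ := by
        rw [← e2, e1]; exact Finset.mem_Icc.2 ⟨hαβ1, le_refl _⟩
      have m4 : β₂ ∈ Finset.Icc α₁ β₁ := by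
        rw [← e1, e2]; exact Finset.mem_Icc.2 ⟨hαβ2, le_refl _⟩
      rw [Finset.mem_Icc] at m1 m2 m3 m4
      omega
    rw [← reach_zero (fun a => min (u a) (w a)) 1 a0,
      reach_inf u w hum hwm hur hwr 1 a0 0 h1 h2, ← hαeq.1, ← hαeq.2,
      min_self, min_self, ← e1]
end
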